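/- arXiv:1701.08952 — 7 statements merged into one kernel-verified Lean document; each statement's English description precedes it below -/
import Mathlib

section
/- Let Σ=(X,𝒰,φ) be a forward complete control system. The following statements are equivalent: (i) Σ is ISS; (ii) Σ is UAG, CEP and BRS; (iii) Σ is ULIM, ULS and BRS; (iv) Σ is ULIM and UGS. -/
open Set Filter

/-- Class `K`: continuous, strictly increasing on `[0,∞)` and vanishing at `0`. -/
def ClassK (γ : ℝ → ℝ) : Prop :=
  ContinuousOn γ (Ici 0) ∧ StrictMonoOn γ (Ici 0) ∧ γ 0 = 0

/-- Class `K∞`: class `K` and unbounded. -/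
def ClassKinf (γ : ℝ → ℝ) : Prop :=
  ClassK γ ∧ ∀ c : ℝ, ∃ r : ℝ, 0 ≤ r ∧ c ≤ γ r

/-- The class `K∞ ∪ {0}`. -/
def ClassKinf0 (γ : ℝ → ℝ) : Prop :=
  ClassKinf γ ∨ ∀ r : ℝ, 0 ≤ r → γ r = 0

/-- The class `K ∪ {0}`. -/
def ClassK0 (γ : ℝ → ℝ) : Prop :=
  ClassK γ ∨ ∀ r : ℝ, 0 ≤ r → γ r = 0

/-- Class `L`: continuous, strictly decreasing on `[0,∞)` with limit `0` at infinity. -/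
def ClassL (γ : ℝ → ℝ) : Prop :=
  ContinuousOn γ (Ici 0) ∧ StrictAntiOn γ (Ici 0) ∧ Tendsto γ atTop (nhds 0)

/-- Class `KL`. -/
def ClassKL (β : ℝ → ℝ → ℝ) : Prop :=
  ContinuousOn (fun p : ℝ × ℝ => β p.1 p.2) ((Ici 0) ×ˢ (Ici 0)) ∧
  (∀ t : ℝ, 0 ≤ t → ClassK (fun r => β r t)) ∧
  ∀ r : ℝ, 0 < r → StrictAntiOn (β r) (Ici 0) ∧ Tendsto (β r) atTop (nhds 0)

/-! helpers -/

noncomputable def cl (s : ℝ) : ℝ := max 0 (min 1 s)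

lemma cl_nonneg (s : ℝ) : 0 ≤ cl s := le_max_left _ _

lemma cl_le_one (s : ℝ) : cl s ≤ 1 := max_le zero_le_one (min_le_left _ _)

lemma cl_mono : Monotone cl := fun a b h => max_le_max le_rfl (min_le_min le_rfl h)

lemma cl_eq_one {s : ℝ} (h : 1 ≤ s) : cl s = 1 := by
  unfold cl; rw [min_eq_left h]; exact max_eq_right zero_le_one

lemma cl_eq_zero {s : ℝ} (h : s ≤ 0) : cl s = 0 := by
  unfold cl
  have : min 1 s ≤ 0 := le_trans (min_le_right _ _) h
  exact max_eq_left this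

lemma cl_eq_self {s : ℝ} (h0 : 0 ≤ s) (h1 : s ≤ 1) : cl s = s := by
  unfold cl; rw [min_eq_right h1]; exact max_eq_right h0

lemma continuousOn_min {α : Type*} [TopologicalSpace α] {f g : α → ℝ} {s : Set α}
    (hf : ContinuousOn f s) (hg : ContinuousOn g s) :
    ContinuousOn (fun x => min (f x) (g x)) s := fun x hx => (hf x hx).min (hg x hx)

lemma continuous_cl : Continuous cl :=
  continuous_const.max (continuous_const.min continuous_id)

lemma abs_cl (s : ℝ) : |cl s| = cl s := abs_of_nonneg (cl_nonneg s)

namespace ClassK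

lemma monotoneOn {γ : ℝ → ℝ} (h : ClassK γ) : MonotoneOn γ (Ici 0) :=
  h.2.1.monotoneOn

lemma nonneg {γ : ℝ → ℝ} (h : ClassK γ) {s : ℝ} (hs : 0 ≤ s) : 0 ≤ γ s := by
  rcases eq_or_lt_of_le hs with rfl | hlt
  · exact le_of_eq h.2.2.symm
  · have := h.2.1 (self_mem_Ici) (le_of_lt hlt : (0:ℝ) ≤ s) hlt
    rw [h.2.2] at this; exact le_of_lt this

lemma le_of_le {γ : ℝ → ℝ} (h : ClassK γ) {a b : ℝ} (ha : 0 ≤ a) (hab : a ≤ b) :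
    γ a ≤ γ b := h.monotoneOn ha (le_trans ha hab) hab

/-- small at small -/
lemma small {γ : ℝ → ℝ} (h : ClassK γ) {ε : ℝ} (hε : 0 < ε) :
    ∃ δ > 0, ∀ s, 0 ≤ s → s ≤ δ → γ s ≤ ε := by
  have hc : ContinuousWithinAt γ (Ici 0) 0 := h.1 0 self_mem_Ici
  rw [Metric.continuousWithinAt_iff] at hc
  obtain ⟨δ, hδ, hd⟩ := hc ε hε
  refine ⟨δ/2, by linarith, fun s hs hsd => ?_⟩
  have : dist s 0 < δ := by
    rw [Real.dist_eq, sub_zero, abs_of_nonneg hs]; linarith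
  have := hd hs this
  rw [Real.dist_eq, h.2.2, sub_zero] at this
  calc γ s ≤ |γ s| := le_abs_self _
  _ ≤ ε := le_of_lt this

end ClassK

lemma ClassKinf.id : ClassKinf (fun s : ℝ => s) := by
  refine ⟨⟨continuousOn_id, fun a _ b _ h => h, rfl⟩, fun c => ⟨max c 0, le_max_right _ _, le_max_left _ _⟩⟩

lemma ClassKinf0.toK0 {γ : ℝ → ℝ} (h : ClassKinf0 γ) : ClassK0 γ :=
  h.imp (fun h => h.1) id

/-- dominate a `K ∪ {0}` function by a genuine `K∞` function -/
lemma ClassK0.dom {γ : ℝ → ℝ} (h : ClassK0 γ) :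
    ∃ γ', ClassKinf γ' ∧ ∀ s, 0 ≤ s → γ s ≤ γ' s := by
  rcases h with hK | hz
  · refine ⟨fun s => γ s + s, ⟨⟨hK.1.add continuousOn_id, ?_, by simp [hK.2.2]⟩, fun c => ?_⟩,
      fun s hs => by dsimp only; linarith⟩
    · intro a ha b hb hab
      have := hK.le_of_le ha (le_of_lt hab)
      dsimp only
      linarith
    · refine ⟨max c 0, le_max_right _ _, ?_⟩
      have := hK.nonneg (le_max_right c 0)
      have h2 := le_max_left c 0
      dsimp only
      linarith
  · exact ⟨fun s => s, ClassKinf.id, fun s hs => by dsimp only; rw [hz s hs]; exact hs⟩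

lemma ClassKinf0.dom {γ : ℝ → ℝ} (h : ClassKinf0 γ) :
    ∃ γ', ClassKinf γ' ∧ ∀ s, 0 ≤ s → γ s ≤ γ' s := h.toK0.dom

/-- σ(a+b) ≤ σ(2a)+σ(2b) for monotone σ -/
lemma K_add_split {σ : ℝ → ℝ} (h : ClassK σ) {a b : ℝ} (ha : 0 ≤ a) (hb : 0 ≤ b) :
    σ (a + b) ≤ σ (2*a) + σ (2*b) := by
  rcases le_total a b with hab | hab
  · have h1 : σ (a+b) ≤ σ (2*b) := h.le_of_le (by linarith) (by linarith)
    have h2 : 0 ≤ σ (2*a) := h.nonneg (by linarith)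
    linarith
  · have h1 : σ (a+b) ≤ σ (2*a) := h.le_of_le (by linarith) (by linarith)
    have h2 : 0 ≤ σ (2*b) := h.nonneg (by linarith)
    linarith

/-- strict mono from monotone + strict mono -/
lemma monoOn_add_strictMonoOn {f g : ℝ → ℝ} {s : Set ℝ} (hf : MonotoneOn f s)
    (hg : StrictMonoOn g s) : StrictMonoOn (fun x => f x + g x) s := by
  intro a ha b hb hab
  have := hf ha hb (le_of_lt hab)
  have := hg ha hb hab
  dsimp only
  linarith

lemma antitoneOn_add_strictAntiOn {f g : ℝ → ℝ} {s : Set ℝ} (hf : AntitoneOn f s)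
    (hg : StrictAntiOn g s) : StrictAntiOn (fun x => f x + g x) s := by
  intro a ha b hb hab
  have := hf ha hb (le_of_lt hab)
  have := hg ha hb hab
  dsimp only
  linarith

/-- telescoping sums for antitone null sequences -/
lemma hasSum_telescope {b : ℕ → ℝ} (hmono : ∀ n, b (n+1) ≤ b n)
    (hlim : Tendsto b atTop (nhds 0)) (j : ℕ) :
    HasSum (fun i => b (i+j) - b (i+j+1)) (b j) := by
  have hnn : ∀ i, 0 ≤ b (i+j) - b (i+j+1) := fun i => by have := hmono (i+j); linarith
  rw [hasSum_iff_tendsto_nat_of_nonneg hnn]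
  have heq : ∀ n, ∑ i ∈ Finset.range n, (b (i+j) - b (i+j+1)) = b j - b (n+j) := by
    intro n
    have := Finset.sum_range_sub' (fun i => b (i+j)) n
    simpa [add_right_comm] using this
  simp only [heq]
  have h1 : Tendsto (fun n : ℕ => b (n+j)) atTop (nhds 0) :=
    hlim.comp (tendsto_add_atTop_nat j)
  have := (tendsto_const_nhds (x := b j)).sub h1
  simpa using this

/-- A forward complete control system `Σ = (X, 𝒰, φ)`: inputs are functions
`u : ℝ₊ → U` (modelled as functions on `ℝ`, with only `t ≥ 0` relevant);
the set `inputs` of admissible inputs carries a norm `Unorm`, is shift invariant and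
closed under concatenation; the transition map `phi` satisfies the identity property,
causality, continuity in time and the cocycle property. -/
structure ControlSystem (X U : Type*) [NormedAddCommGroup X] [NormedSpace ℝ X] [Zero U] where
  /-- the set of admissible input functions -/
  inputs : Set (ℝ → U)
  /-- the norm of the input space -/
  Unorm : (ℝ → U) → ℝ
  Unorm_nonneg : ∀ u, 0 ≤ Unorm u
  /-- the zero input is admissible -/
  zero_mem : (fun _ : ℝ => (0 : U)) ∈ inputs
  Unorm_zero : Unorm (fun _ : ℝ => (0 : U)) = 0
  /-- the transition map `φ(t,x,u)` -/
  phi : ℝ → X → (ℝ → U) → X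
  /-- axiom of shift invariance -/
  shift_mem : ∀ u ∈ inputs, ∀ τ : ℝ, 0 ≤ τ → (fun s => u (s + τ)) ∈ inputs
  shift_norm : ∀ u ∈ inputs, ∀ τ : ℝ, 0 ≤ τ → Unorm (fun s => u (s + τ)) ≤ Unorm u
  /-- axiom of concatenation -/
  concat_mem : ∀ u₁ ∈ inputs, ∀ u₂ ∈ inputs, ∀ t : ℝ, 0 < t →
    (fun s => if s ≤ t then u₁ s else u₂ (s - t)) ∈ inputs
  /-- identity property -/
  identity : ∀ x u, phi 0 x u = x
  /-- causality -/
  causality : ∀ t : ℝ, 0 ≤ t → ∀ x : X, ∀ u ∈ inputs, ∀ v ∈ inputs,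
    (∀ s ∈ Icc (0:ℝ) t, u s = v s) → phi t x u = phi t x v
  /-- continuity of trajectories -/
  cont : ∀ x : X, ∀ u ∈ inputs, ContinuousOn (fun t => phi t x u) (Ici 0)
  /-- cocycle property -/
  cocycle : ∀ t : ℝ, 0 ≤ t → ∀ h : ℝ, 0 ≤ h → ∀ x : X, ∀ u ∈ inputs,
    phi h (phi t x u) (fun s => u (s + t)) = phi (t + h) x u

namespace ControlSystem

variable {X U : Type*} [NormedAddCommGroup X] [NormedSpace ℝ X] [Zero U]

/-- the zero input -/
def zeroIn : ℝ → U := fun _ => 0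

/-- Input-to-state stability. -/
def ISS (S : ControlSystem X U) : Prop :=
  ∃ β γ, ClassKL β ∧ ClassK γ ∧
    ∀ x : X, ∀ u ∈ S.inputs, ∀ t : ℝ, 0 ≤ t →
      ‖S.phi t x u‖ ≤ β ‖x‖ t + γ (S.Unorm u)

/-- Uniform asymptotic gain property. -/
def UAG (S : ControlSystem X U) : Prop :=
  ∃ γ, ClassKinf0 γ ∧
    ∀ ε : ℝ, 0 < ε → ∀ r : ℝ, 0 < r → ∃ τ : ℝ, 0 ≤ τ ∧
      ∀ u ∈ S.inputs, ∀ x : X, ‖x‖ < r → ∀ t : ℝ, τ ≤ t →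
        ‖S.phi t x u‖ ≤ ε + γ (S.Unorm u)

/-- Continuity at the equilibrium: `0` is an equilibrium of the undisturbed system and
the flow is continuous at `(x,u) = (0,0)`, uniformly on compact time intervals. -/
def CEP (S : ControlSystem X U) : Prop :=
  (∀ t : ℝ, 0 ≤ t → S.phi t 0 zeroIn = 0) ∧
  ∀ ε : ℝ, 0 < ε → ∀ h : ℝ, 0 < h → ∃ δ : ℝ, 0 < δ ∧
    ∀ t ∈ Icc (0:ℝ) h, ∀ x : X, ‖x‖ ≤ δ → ∀ u ∈ S.inputs, S.Unorm u ≤ δ →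
      ‖S.phi t x u‖ ≤ ε

/-- Bounded reachability sets. -/
def BRS (S : ControlSystem X U) : Prop :=
  ∀ C : ℝ, 0 < C → ∀ τ : ℝ, 0 < τ → ∃ M : ℝ,
    ∀ x : X, ‖x‖ ≤ C → ∀ u ∈ S.inputs, S.Unorm u ≤ C → ∀ t ∈ Icc (0:ℝ) τ,
      ‖S.phi t x u‖ ≤ M

/-- Uniform limit property. -/
def ULIM (S : ControlSystem X U) : Prop :=
  ∃ γ, ClassK0 γ ∧
    ∀ ε : ℝ, 0 < ε → ∀ r : ℝ, 0 < r → ∃ τ : ℝ, 0 ≤ τ ∧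
      ∀ x : X, ‖x‖ ≤ r → ∀ u ∈ S.inputs, ∃ t ∈ Icc (0:ℝ) τ,
        ‖S.phi t x u‖ ≤ ε + γ (S.Unorm u)

/-- Uniform local stability. -/
def ULS (S : ControlSystem X U) : Prop :=
  ∃ σ γ, ClassKinf σ ∧ ClassKinf0 γ ∧ ∃ r : ℝ, 0 < r ∧
    ∀ t : ℝ, 0 ≤ t → ∀ x : X, ‖x‖ ≤ r → ∀ u ∈ S.inputs, S.Unorm u ≤ r →
      ‖S.phi t x u‖ ≤ σ ‖x‖ + γ (S.Unorm u)

/-- Uniform global stability. -/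
def UGS (S : ControlSystem X U) : Prop :=
  ∃ σ γ, ClassKinf σ ∧ ClassKinf0 γ ∧
    ∀ t : ℝ, 0 ≤ t → ∀ x : X, ∀ u ∈ S.inputs,
      ‖S.phi t x u‖ ≤ σ ‖x‖ + γ (S.Unorm u)



/-! ### Basic consequences of the system axioms -/

lemma zeroIn_mem (S : ControlSystem X U) : (zeroIn : ℝ → U) ∈ S.inputs := S.zero_mem

lemma Unorm_zeroIn (S : ControlSystem X U) : S.Unorm (zeroIn : ℝ → U) = 0 := S.Unorm_zero

/-- restart the trajectory at an intermediate time -/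
lemma restart (S : ControlSystem X U) {t s : ℝ} (hs : 0 ≤ s) (hst : s ≤ t)
    (x : X) {u : ℝ → U} (hu : u ∈ S.inputs) :
    S.phi t x u = S.phi (t - s) (S.phi s x u) (fun r => u (r + s)) := by
  have := S.cocycle s hs (t - s) (by linarith) x u hu
  rw [this, add_sub_cancel]

/-- trajectories from `(0,0)` vanish, given ISS -/
lemma phi_zero_of_ISS (S : ControlSystem X U) (h : S.ISS) {t : ℝ} (ht : 0 ≤ t) :
    S.phi t 0 zeroIn = 0 := by
  obtain ⟨β, γ, hβ, hγ, hb⟩ := h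
  have h1 := hb 0 zeroIn S.zeroIn_mem t ht
  have h2 : β 0 t = 0 := (hβ.2.1 t ht).2.2
  rw [norm_zero, S.Unorm_zeroIn, hγ.2.2, h2] at h1
  exact norm_le_zero_iff.mp (by linarith)

/-! ### ISS implies everything -/

/-- for `t ≥ 0` and `0 ≤ a ≤ b`,  `β a t ≤ β b t`, and `β r ·` is antitone for `r ≥ 0` -/
lemma KL_mono_fst {β : ℝ → ℝ → ℝ} (hβ : ClassKL β) {t : ℝ} (ht : 0 ≤ t)
    {a b : ℝ} (ha : 0 ≤ a) (hab : a ≤ b) : β a t ≤ β b t :=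
  (hβ.2.1 t ht).le_of_le ha hab

lemma KL_anti_snd {β : ℝ → ℝ → ℝ} (hβ : ClassKL β) {r : ℝ} (hr : 0 ≤ r)
    {s t : ℝ} (hs : 0 ≤ s) (hst : s ≤ t) : β r t ≤ β r s := by
  rcases eq_or_lt_of_le hr with rfl | hr'
  · have h1 : β 0 t = 0 := (hβ.2.1 t (le_trans hs hst)).2.2
    have h2 : β 0 s = 0 := (hβ.2.1 s hs).2.2
    rw [h1, h2]
  · rcases eq_or_lt_of_le hst with rfl | h'
    · exact le_rfl
    · exact le_of_lt ((hβ.2.2 r hr').1 hs (le_trans hs hst) h')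

lemma KL_nonneg {β : ℝ → ℝ → ℝ} (hβ : ClassKL β) {r t : ℝ} (hr : 0 ≤ r) (ht : 0 ≤ t) :
    0 ≤ β r t := (hβ.2.1 t ht).nonneg hr

/-- eventually small in t -/
lemma KL_eventually {β : ℝ → ℝ → ℝ} (hβ : ClassKL β) {r ε : ℝ} (hr : 0 ≤ r) (hε : 0 < ε) :
    ∃ τ : ℝ, 0 ≤ τ ∧ ∀ t, τ ≤ t → β r t ≤ ε := by
  rcases eq_or_lt_of_le hr with rfl | hr'
  · refine ⟨0, le_rfl, fun t ht => ?_⟩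
    have h1 : β 0 t = 0 := (hβ.2.1 t ht).2.2
    rw [h1]; exact le_of_lt hε
  · obtain ⟨N, hN⟩ := Metric.tendsto_atTop.mp (hβ.2.2 r hr').2 ε hε
    refine ⟨max N 0, le_max_right _ _, fun t ht => ?_⟩
    have h1 : β r t ≤ β r (max N 0) :=
      KL_anti_snd hβ hr (le_max_right _ _) ht
    have h2 := hN (max N 0) (le_max_left _ _)
    rw [Real.dist_eq, sub_zero] at h2
    calc β r t ≤ β r (max N 0) := h1
    _ ≤ |β r (max N 0)| := le_abs_self _
    _ ≤ ε := le_of_lt h2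

lemma ISS.toUGS {S : ControlSystem X U} (h : S.ISS) : S.UGS := by
  obtain ⟨β, γ, hβ, hγ, hb⟩ := h
  obtain ⟨σ', hσ', hdσ⟩ := ClassK0.dom (Or.inl (hβ.2.1 0 le_rfl))
  obtain ⟨γ', hγ', hdγ⟩ := ClassK0.dom (Or.inl hγ)
  refine ⟨σ', γ', hσ', Or.inl hγ', fun t ht x u hu => ?_⟩
  have h1 := hb x u hu t ht
  have h2 : β ‖x‖ t ≤ β ‖x‖ 0 := KL_anti_snd hβ (norm_nonneg x) le_rfl ht
  have h3 := hdσ ‖x‖ (norm_nonneg x)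
  have h4 := hdγ _ (S.Unorm_nonneg u)
  linarith

lemma ISS.toUAG {S : ControlSystem X U} (h : S.ISS) : S.UAG := by
  obtain ⟨β, γ, hβ, hγ, hb⟩ := h
  obtain ⟨γ', hγ', hdγ⟩ := ClassK0.dom (Or.inl hγ)
  refine ⟨γ', Or.inl hγ', fun ε hε r hr => ?_⟩
  obtain ⟨τ, hτ0, hτ⟩ := KL_eventually hβ (le_of_lt hr) hε
  refine ⟨τ, hτ0, fun u hu x hx t ht => ?_⟩
  have h1 := hb x u hu t (le_trans hτ0 ht)
  have h2 : β ‖x‖ t ≤ β r t :=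
    KL_mono_fst hβ (le_trans hτ0 ht) (norm_nonneg x) (le_of_lt hx)
  have h3 := hτ t ht
  have h4 := hdγ _ (S.Unorm_nonneg u)
  linarith

lemma ISS.toCEP {S : ControlSystem X U} (h : S.ISS) : S.CEP := by
  obtain ⟨β, γ, hβ, hγ, hb⟩ := h
  constructor
  · exact fun t ht => S.phi_zero_of_ISS ⟨β, γ, hβ, hγ, hb⟩ ht
  · intro ε hε h' _
    have hK : ClassK (fun r => β r 0 + γ r) :=
      ⟨(hβ.2.1 0 le_rfl).1.add hγ.1,
        monoOn_add_strictMonoOn (hβ.2.1 0 le_rfl).monotoneOn hγ.2.1,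
        by have h1 : β 0 0 = 0 := (hβ.2.1 0 le_rfl).2.2
           show β 0 0 + γ 0 = 0
           rw [h1, hγ.2.2]; ring⟩
    obtain ⟨δ, hδ, hsm⟩ := hK.small hε
    refine ⟨δ, hδ, fun t htm x hx u hu hun => ?_⟩
    have h1 := hb x u hu t htm.1
    have h2 : β ‖x‖ t ≤ β ‖x‖ 0 := KL_anti_snd hβ (norm_nonneg x) le_rfl htm.1
    have h3 : β ‖x‖ 0 ≤ β δ 0 := KL_mono_fst hβ le_rfl (norm_nonneg x) hx
    have h4 : γ (S.Unorm u) ≤ γ δ := hγ.le_of_le (S.Unorm_nonneg u) hun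
    have h5 : β δ 0 + γ δ ≤ ε := hsm δ (le_of_lt hδ) le_rfl
    linarith

lemma ISS.toBRS {S : ControlSystem X U} (h : S.ISS) : S.BRS := by
  obtain ⟨β, γ, hβ, hγ, hb⟩ := h
  intro C hC τ _
  refine ⟨β C 0 + γ C, fun x hx u hu hun t htm => ?_⟩
  have h1 := hb x u hu t htm.1
  have h2 : β ‖x‖ t ≤ β C t := KL_mono_fst hβ htm.1 (norm_nonneg x) hx
  have h3 : β C t ≤ β C 0 := KL_anti_snd hβ (le_of_lt hC) le_rfl htm.1
  have h4 : γ (S.Unorm u) ≤ γ C := hγ.le_of_le (S.Unorm_nonneg u) hun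
  linarith

lemma ISS.toULIM {S : ControlSystem X U} (h : S.ISS) : S.ULIM := by
  obtain ⟨β, γ, hβ, hγ, hb⟩ := h
  refine ⟨γ, Or.inl hγ, fun ε hε r hr => ?_⟩
  obtain ⟨τ, hτ0, hτ⟩ := KL_eventually hβ (le_of_lt hr) hε
  refine ⟨τ, hτ0, fun x hx u hu => ⟨τ, ⟨hτ0, le_rfl⟩, ?_⟩⟩
  have h1 := hb x u hu τ hτ0
  have h2 : β ‖x‖ τ ≤ β r τ := KL_mono_fst hβ hτ0 (norm_nonneg x) hx
  have h3 := hτ τ le_rfl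
  linarith

lemma UGS.toULS {S : ControlSystem X U} (h : S.UGS) : S.ULS := by
  obtain ⟨σ, γ, hσ, hγ, hb⟩ := h
  exact ⟨σ, γ, hσ, hγ, 1, one_pos, fun t ht x _ u hu _ => hb t ht x u hu⟩

lemma UAG.toULIM {S : ControlSystem X U} (h : S.UAG) : S.ULIM := by
  obtain ⟨γ, hγ, hb⟩ := h
  refine ⟨γ, hγ.toK0, fun ε hε r hr => ?_⟩
  obtain ⟨τ, hτ0, hτ⟩ := hb ε hε (r+1) (by linarith)
  exact ⟨τ, hτ0, fun x hx u hu =>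
    ⟨τ, ⟨hτ0, le_rfl⟩, hτ u hu x (by linarith [hx]) τ le_rfl⟩⟩


/-! ### Global boundedness from ULIM and BRS -/

/-- ULIM with a dominating `K∞` gain -/
lemma ULIM.dom' {S : ControlSystem X U} (h : S.ULIM) :
    ∃ γL, ClassKinf γL ∧ ∀ ε : ℝ, 0 < ε → ∀ r : ℝ, 0 < r → ∃ τ : ℝ, 0 ≤ τ ∧
      ∀ x : X, ‖x‖ ≤ r → ∀ u ∈ S.inputs, ∃ t ∈ Icc (0:ℝ) τ,
        ‖S.phi t x u‖ ≤ ε + γL (S.Unorm u) := by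
  obtain ⟨γ, hγ, hb⟩ := h
  obtain ⟨γL, hγL, hd⟩ := hγ.dom
  refine ⟨γL, hγL, fun ε hε r hr => ?_⟩
  obtain ⟨τ, hτ0, hτ⟩ := hb ε hε r hr
  refine ⟨τ, hτ0, fun x hx u hu => ?_⟩
  obtain ⟨t, htm, hle⟩ := hτ x hx u hu
  exact ⟨t, htm, le_trans hle (by linarith [hd _ (S.Unorm_nonneg u)])⟩

lemma bnd {S : ControlSystem X U} (hulim : S.ULIM) (hbrs : S.BRS) :
    ∀ C : ℝ, 0 < C → ∃ M : ℝ, 0 ≤ M ∧ ∀ x : X, ‖x‖ ≤ C → ∀ u ∈ S.inputs,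
      S.Unorm u ≤ C → ∀ t : ℝ, 0 ≤ t → ‖S.phi t x u‖ ≤ M := by
  obtain ⟨γL, hγL, hul⟩ := hulim.dom'
  intro C hC
  set ρ : ℝ := 1 + γL C with hρdef
  have hγLC : 0 ≤ γL C := hγL.1.nonneg (le_of_lt hC)
  have hρ : 0 < ρ := by positivity
  obtain ⟨τ₁, hτ₁0, hτ₁⟩ := hul 1 one_pos C hC
  set B1 : ℝ := max C ρ with hB1def
  have hB1 : 0 < B1 := lt_max_of_lt_left hC
  obtain ⟨M₁, hM₁⟩ := hbrs B1 hB1 1 one_pos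
  set R : ℝ := max M₁ B1 with hRdef
  have hR : 0 < R := lt_max_of_lt_right hB1
  obtain ⟨τ₃, hτ₃0, hτ₃⟩ := hul 1 one_pos R hR
  obtain ⟨M₂, hM₂⟩ := hbrs R hR (τ₃+1) (by linarith)
  obtain ⟨M₀, hM₀⟩ := hbrs C hC (τ₁+1) (by linarith)
  set M : ℝ := max (max M₀ M₂) (max M₁ B1) with hMdef
  have hMB1 : B1 ≤ M := le_max_of_le_right (le_max_right _ _)
  have hMM₁ : M₁ ≤ M := le_max_of_le_right (le_max_left _ _)
  have hMM₀ : M₀ ≤ M := le_max_of_le_left (le_max_left _ _)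
  have hMM₂ : M₂ ≤ M := le_max_of_le_left (le_max_right _ _)
  have hρB1 : ρ ≤ B1 := le_max_right _ _
  have hCB1 : C ≤ B1 := le_max_left _ _
  have hB1R : B1 ≤ R := le_max_right _ _
  -- the inductive claim
  have claim : ∀ n : ℕ, ∀ y : X, ‖y‖ ≤ ρ → ∀ v ∈ S.inputs, S.Unorm v ≤ C →
      ∀ t : ℝ, 0 ≤ t → t ≤ (n:ℝ) → ‖S.phi t y v‖ ≤ M := by
    intro n
    induction n with
    | zero =>
      intro y hy v hv hvn t ht0 htn
      have : t = 0 := le_antisymm (by exact_mod_cast htn) ht0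
      rw [this, S.identity]
      linarith
    | succ n ih =>
      intro y hy v hv hvn t ht0 htn
      rcases le_or_gt t 1 with h1 | h1
      · have := hM₁ y (le_trans hy hρB1) v hv (le_trans hvn hCB1) t ⟨ht0, h1⟩
        linarith
      · -- step forward one unit of time
        set z := S.phi 1 y v with hzdef
        have hz : ‖z‖ ≤ R := by
          have := hM₁ y (le_trans hy hρB1) v hv (le_trans hvn hCB1) 1 ⟨zero_le_one, le_rfl⟩
          exact le_trans this (le_max_left _ _)
        set v1 : ℝ → U := fun s => v (s + 1) with hv1def
        have hv1 : v1 ∈ S.inputs := S.shift_mem v hv 1 zero_le_one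
        have hv1n : S.Unorm v1 ≤ C := le_trans (S.shift_norm v hv 1 zero_le_one) hvn
        have hsplit : S.phi t y v = S.phi (t-1) z v1 :=
          S.restart zero_le_one (le_of_lt h1) y hv
        obtain ⟨t', ht'm, ht'⟩ := hτ₃ z hz v1 hv1
        have hsmall : ‖S.phi t' z v1‖ ≤ ρ := by
          have : γL (S.Unorm v1) ≤ γL C :=
            hγL.1.le_of_le (S.Unorm_nonneg v1) hv1n
          linarith
        rcases le_or_gt (t-1) t' with h2 | h2
        · have := hM₂ z hz v1 hv1 (le_trans hv1n (le_trans hCB1 hB1R)) (t-1)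
            ⟨by linarith, by linarith [ht'm.2]⟩
          rw [hsplit]
          linarith
        · set y' := S.phi t' z v1 with hy'def
          set v2 : ℝ → U := fun s => v1 (s + t') with hv2def
          have hsplit2 : S.phi (t-1) z v1 = S.phi (t-1-t') y' v2 :=
            S.restart ht'm.1 (le_of_lt h2) z hv1
          have hv2 : v2 ∈ S.inputs := S.shift_mem v1 hv1 t' ht'm.1
          have hv2n : S.Unorm v2 ≤ C := le_trans (S.shift_norm v1 hv1 t' ht'm.1) hv1n
          have hlt : t - 1 - t' ≤ (n:ℝ) := by
            push_cast at htn ⊢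
            linarith [ht'm.1]
          rw [hsplit, hsplit2]
          exact ih y' hsmall v2 hv2 hv2n (t-1-t') (by linarith) hlt
  -- main argument
  refine ⟨M, le_trans (le_of_lt hB1) hMB1, fun x hx u hu hun t ht0 => ?_⟩
  obtain ⟨t₀, ht₀m, ht₀⟩ := hτ₁ x hx u hu
  have hsmall : ‖S.phi t₀ x u‖ ≤ ρ := by
    have : γL (S.Unorm u) ≤ γL C := hγL.1.le_of_le (S.Unorm_nonneg u) hun
    linarith
  rcases le_or_gt t t₀ with h1 | h1
  · have := hM₀ x hx u hu hun t ⟨ht0, by linarith [ht₀m.2]⟩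
    linarith
  · have hsplit : S.phi t x u = S.phi (t - t₀) (S.phi t₀ x u) (fun s => u (s + t₀)) :=
      S.restart ht₀m.1 (le_of_lt h1) x hu
    obtain ⟨n, hn⟩ := exists_nat_ge (t - t₀)
    rw [hsplit]
    exact claim n _ hsmall _ (S.shift_mem u hu t₀ ht₀m.1)
      (le_trans (S.shift_norm u hu t₀ ht₀m.1) hun) (t - t₀) (by linarith) hn


/-! ### Smallness near the equilibrium -/

/-- extract an `ε/2`-smallness estimate from a `K∞ ∪ {0}` gain -/
lemma Kinf0_small {γ : ℝ → ℝ} (hγ : ClassKinf0 γ) {ε : ℝ} (hε : 0 < ε) :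
    ∃ δ > 0, ∀ s, 0 ≤ s → s ≤ δ → γ s ≤ ε := by
  rcases hγ with hK | hz
  · exact hK.1.small hε
  · exact ⟨1, one_pos, fun s hs _ => by rw [hz s hs]; exact le_of_lt hε⟩

def SML (S : ControlSystem X U) : Prop :=
  ∀ ε : ℝ, 0 < ε → ∃ δ : ℝ, 0 < δ ∧ ∀ t : ℝ, 0 ≤ t → ∀ x : X, ‖x‖ ≤ δ →
    ∀ u ∈ S.inputs, S.Unorm u ≤ δ → ‖S.phi t x u‖ ≤ ε

lemma ULS.toSML {S : ControlSystem X U} (h : S.ULS) : S.SML := by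
  obtain ⟨σ, γ, hσ, hγ, r, hr, hb⟩ := h
  intro ε hε
  obtain ⟨δ₁, hδ₁, h₁⟩ := hσ.1.small (half_pos hε)
  obtain ⟨δ₂, hδ₂, h₂⟩ := Kinf0_small hγ (half_pos hε)
  refine ⟨min r (min δ₁ δ₂), by positivity, fun t ht x hx u hu hun => ?_⟩
  have hxr : ‖x‖ ≤ r := le_trans hx (min_le_left _ _)
  have hur : S.Unorm u ≤ r := le_trans hun (min_le_left _ _)
  have hb' := hb t ht x hxr u hu hur
  have hσs : σ ‖x‖ ≤ ε/2 := h₁ _ (norm_nonneg x)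
    (le_trans hx (le_trans (min_le_right _ _) (min_le_left _ _)))
  have hγs : γ (S.Unorm u) ≤ ε/2 := h₂ _ (S.Unorm_nonneg u)
    (le_trans hun (le_trans (min_le_right _ _) (min_le_right _ _)))
  linarith

lemma UAG_CEP_toSML {S : ControlSystem X U} (huag : S.UAG) (hcep : S.CEP) : S.SML := by
  obtain ⟨γ, hγ, hb⟩ := huag
  intro ε hε
  obtain ⟨δ₂, hδ₂, h₂⟩ := Kinf0_small hγ (half_pos hε)
  obtain ⟨τ, hτ0, hτ⟩ := hb (ε/2) (half_pos hε) 1 one_pos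
  obtain ⟨δ₃, hδ₃, h₃⟩ := hcep.2 ε hε (τ+1) (by linarith)
  refine ⟨min (1/2) (min δ₂ δ₃), by positivity, fun t ht x hx u hu hun => ?_⟩
  rcases le_or_gt t (τ+1) with h1 | h1
  · exact h₃ t ⟨ht, h1⟩ x (le_trans hx (le_trans (min_le_right _ _) (min_le_right _ _)))
      u hu (le_trans hun (le_trans (min_le_right _ _) (min_le_right _ _)))
  · have hx1 : ‖x‖ < 1 := lt_of_le_of_lt (le_trans hx (min_le_left _ _)) (by norm_num)
    have := hτ u hu x hx1 t (by linarith)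
    have hγs : γ (S.Unorm u) ≤ ε/2 := h₂ _ (S.Unorm_nonneg u)
      (le_trans hun (le_trans (min_le_right _ _) (min_le_left _ _)))
    linarith

/-! ### UGS from boundedness and smallness -/

lemma UGS_construct {S : ControlSystem X U}
    (hbnd : ∀ C : ℝ, 0 < C → ∃ M : ℝ, 0 ≤ M ∧ ∀ x : X, ‖x‖ ≤ C → ∀ u ∈ S.inputs,
      S.Unorm u ≤ C → ∀ t : ℝ, 0 ≤ t → ‖S.phi t x u‖ ≤ M)
    (hsml : S.SML) : S.UGS := by
  classical
  set A : ℝ → Set ℝ := fun C => {y | ∃ t x u, 0 ≤ t ∧ ‖x‖ ≤ C ∧ u ∈ S.inputs ∧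
    S.Unorm u ≤ C ∧ y = ‖S.phi t x u‖} with hAdef
  set m : ℝ → ℝ := fun C => sSup (A C) with hmdef
  have hz : ∀ C : ℝ, 0 ≤ C → (0:ℝ) ∈ A C := by
    intro C hC
    refine ⟨0, 0, zeroIn, le_rfl, by simpa using hC, S.zeroIn_mem, ?_, ?_⟩
    · rw [S.Unorm_zeroIn]; exact hC
    · rw [S.identity, norm_zero]
  have hbdd : ∀ C : ℝ, 0 ≤ C → BddAbove (A C) := by
    intro C hC
    obtain ⟨M, _, hM⟩ := hbnd (C+1) (by linarith)
    refine ⟨M, fun y hy => ?_⟩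
    obtain ⟨t, x, u, ht, hx, hu, hun, rfl⟩ := hy
    exact hM x (by linarith) u hu (by linarith) t ht
  have hm0 : ∀ C : ℝ, 0 ≤ C → 0 ≤ m C := fun C hC => le_csSup (hbdd C hC) (hz C hC)
  have hmono : ∀ C C' : ℝ, 0 ≤ C → C ≤ C' → m C ≤ m C' := by
    intro C C' hC hCC'
    refine csSup_le_csSup (hbdd C' (by linarith)) ⟨0, hz C hC⟩ ?_
    rintro y ⟨t, x, u, ht, hx, hu, hun, rfl⟩
    exact ⟨t, x, u, ht, by linarith, hu, by linarith, rfl⟩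
  have hpt : ∀ t : ℝ, 0 ≤ t → ∀ x : X, ∀ u ∈ S.inputs,
      ‖S.phi t x u‖ ≤ m (max ‖x‖ (S.Unorm u)) := by
    intro t ht x u hu
    exact le_csSup (hbdd _ (le_trans (norm_nonneg x) (le_max_left _ _)))
      ⟨t, x, u, ht, le_max_left _ _, hu, le_max_right _ _, rfl⟩
  have hsmall' : ∀ ε : ℝ, 0 < ε → ∃ δ > 0, ∀ C, 0 ≤ C → C ≤ δ → m C ≤ ε := by
    intro ε hε
    obtain ⟨δ, hδ, hs⟩ := hsml ε hε
    refine ⟨δ, hδ, fun C hC hCδ => csSup_le ⟨0, hz C hC⟩ ?_⟩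
    rintro y ⟨t, x, u, ht, hx, hu, hun, rfl⟩
    exact hs t ht x (by linarith) u hu (by linarith)
  -- the dyadic sequence
  set a : ℕ → ℝ := fun n => m ((2⁻¹:ℝ)^n) with hadef
  have hpow_nonneg : ∀ n : ℕ, (0:ℝ) ≤ (2⁻¹:ℝ)^n := fun n => by positivity
  have hamono : ∀ n, a (n+1) ≤ a n := fun n =>
    hmono _ _ (hpow_nonneg (n+1)) (pow_le_pow_of_le_one (by norm_num) (by norm_num) (by omega))
  have ha0 : ∀ n, 0 ≤ a n := fun n => hm0 _ (hpow_nonneg n)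
  have halim : Tendsto a atTop (nhds 0) := by
    rw [Metric.tendsto_atTop]
    intro ε hε
    obtain ⟨δ, hδ, hs⟩ := hsmall' (ε/2) (half_pos hε)
    obtain ⟨N, hN⟩ := exists_pow_lt_of_lt_one hδ (by norm_num : (2⁻¹:ℝ) < 1)
    refine ⟨N, fun n hn => ?_⟩
    have h1 : (2⁻¹:ℝ)^n ≤ (2⁻¹:ℝ)^N :=
      pow_le_pow_of_le_one (by norm_num) (by norm_num) hn
    have h2 : a n ≤ ε/2 := hs _ (hpow_nonneg n) (by linarith)
    rw [Real.dist_eq, sub_zero, abs_of_nonneg (ha0 n)]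
    linarith
  set d : ℕ → ℝ := fun n => a n - a (n+1) with hddef
  have hd0 : ∀ n, 0 ≤ d n := fun n => by simp only [hddef]; linarith [hamono n]
  have hdsum : ∀ j : ℕ, HasSum (fun i => d (i+j)) (a j) := fun j =>
    hasSum_telescope hamono halim j
  have hdsum0 : Summable d := by
    have := (hdsum 0).summable
    simpa using this
  -- h₁ : handles small C
  set h₁ : ℝ → ℝ := fun C => ∑' n : ℕ, d n * cl ((2:ℝ)^(n+2) * C - 1) with h1def
  have h1term_le : ∀ (n : ℕ) (C : ℝ), d n * cl ((2:ℝ)^(n+2) * C - 1) ≤ d n := by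
    intro n C
    calc d n * cl _ ≤ d n * 1 := mul_le_mul_of_nonneg_left (cl_le_one _) (hd0 n)
    _ = d n := mul_one _
  have h1term_nonneg : ∀ (n : ℕ) (C : ℝ), 0 ≤ d n * cl ((2:ℝ)^(n+2) * C - 1) :=
    fun n C => mul_nonneg (hd0 n) (cl_nonneg _)
  have h1summ : ∀ C : ℝ, Summable (fun n : ℕ => d n * cl ((2:ℝ)^(n+2) * C - 1)) :=
    fun C => Summable.of_nonneg_of_le (h1term_nonneg · C) (h1term_le · C) hdsum0
  have h1cont : Continuous h₁ := by
    refine continuous_tsum (fun n => ?_) hdsum0 (fun n C => ?_)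
    · exact continuous_const.mul (continuous_cl.comp ((continuous_const.mul continuous_id).sub continuous_const))
    · rw [Real.norm_eq_abs, abs_of_nonneg (h1term_nonneg n C)]
      exact h1term_le n C
  have h1mono : Monotone h₁ := by
    intro C C' hCC'
    refine Summable.tsum_le_tsum (fun n => ?_) (h1summ C) (h1summ C')
    refine mul_le_mul_of_nonneg_left (cl_mono ?_) (hd0 n)
    have : (2:ℝ)^(n+2) * C ≤ (2:ℝ)^(n+2) * C' :=
      mul_le_mul_of_nonneg_left hCC' (by positivity)
    linarith
  have h1zero : h₁ 0 = 0 := by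
    rw [h1def]
    convert tsum_zero with n
    rw [mul_zero, zero_sub, cl_eq_zero (by norm_num), mul_zero]
  have h1nonneg : ∀ C, 0 ≤ h₁ C := fun C => tsum_nonneg (h1term_nonneg · C)
  have h1lb : ∀ (n : ℕ) (C : ℝ), (2⁻¹:ℝ)^(n+1) ≤ C → a n ≤ h₁ C := by
    intro n C hC
    have key : ∀ k : ℕ, d (k+n) * cl ((2:ℝ)^(k+n+2) * C - 1) = d (k+n) := by
      intro k
      have hpow : (2:ℝ)^(k+n+2) * (2⁻¹:ℝ)^(n+1) = 2^(k+1) := by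
        rw [inv_pow, show k+n+2 = (k+1)+(n+1) from by omega, pow_add, mul_assoc,
          mul_inv_cancel₀ (by positivity), mul_one]
      have hge : (2:ℝ)^(k+1) ≤ (2:ℝ)^(k+n+2) * C := by
        calc (2:ℝ)^(k+1) = 2^(k+n+2) * (2⁻¹:ℝ)^(n+1) := hpow.symm
        _ ≤ 2^(k+n+2) * C := mul_le_mul_of_nonneg_left hC (by positivity)
      have h2le : (2:ℝ) ≤ 2^(k+1) := by
        calc (2:ℝ) = 2^1 := (pow_one 2).symm
        _ ≤ 2^(k+1) := pow_le_pow_right₀ one_le_two (by omega)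
      rw [cl_eq_one (by linarith), mul_one]
    have hsplit : (∑ i ∈ Finset.range n, d i * cl ((2:ℝ)^(i+2) * C - 1)) +
        ∑' k : ℕ, d (k+n) * cl ((2:ℝ)^(k+n+2) * C - 1) =
        ∑' i : ℕ, d i * cl ((2:ℝ)^(i+2) * C - 1) :=
      Summable.sum_add_tsum_nat_add n (h1summ C)
    have htail : ∑' k : ℕ, d (k+n) * cl ((2:ℝ)^(k+n+2) * C - 1) = a n := by
      rw [tsum_congr key]
      exact (hdsum n).tsum_eq
    have hhead : 0 ≤ ∑ i ∈ Finset.range n, d i * cl ((2:ℝ)^(i+2) * C - 1) :=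
      Finset.sum_nonneg (fun i _ => h1term_nonneg i C)
    have : a n ≤ ∑' i : ℕ, d i * cl ((2:ℝ)^(i+2) * C - 1) := by
      rw [← hsplit, htail]; linarith
    exact this
  -- h₂ : handles large C
  set e : ℕ → ℝ := fun n => m ((n:ℝ)+2) - m ((n:ℝ)+1) with hedef
  have he0 : ∀ n, 0 ≤ e n := by
    intro n
    have := hmono ((n:ℝ)+1) ((n:ℝ)+2) (by positivity) (by linarith)
    simp only [hedef]
    linarith
  set h₂ : ℝ → ℝ := fun C => ∑' n : ℕ, cl (C - n) * e n with h2def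
  have h2supp : ∀ (C : ℝ) (N : ℕ), C ≤ N →
      ∀ n ∉ Finset.range N, cl (C - (n:ℝ)) * e n = 0 := by
    intro C N hCN n hn
    rw [Finset.mem_range, not_lt] at hn
    have : (N:ℝ) ≤ n := by exact_mod_cast hn
    rw [cl_eq_zero (by linarith), zero_mul]
  have h2fin : ∀ (C : ℝ) (N : ℕ), C ≤ N →
      h₂ C = ∑ n ∈ Finset.range N, cl (C - n) * e n := fun C N hCN =>
    tsum_eq_sum (h2supp C N hCN)
  have h2summ : ∀ C : ℝ, Summable (fun n : ℕ => cl (C - n) * e n) := by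
    intro C
    obtain ⟨N, hN⟩ := exists_nat_ge C
    exact summable_of_ne_finset_zero (h2supp C N hN)
  have h2cont : Continuous h₂ := by
    rw [continuous_iff_continuousAt]
    intro C
    obtain ⟨N, hN⟩ := exists_nat_gt C
    have hop : Iio ((N:ℝ)) ∈ nhds C := Iio_mem_nhds hN
    have heq : h₂ =ᶠ[nhds C] (fun C' => ∑ n ∈ Finset.range N, cl (C' - n) * e n) := by
      filter_upwards [hop] with y hy
      exact h2fin y N (le_of_lt hy)
    refine ContinuousAt.congr ?_ heq.symm
    exact (continuous_finset_sum _ (fun n _ =>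
      (continuous_cl.comp (continuous_id.sub continuous_const)).mul continuous_const)).continuousAt
  have h2mono : Monotone h₂ := by
    intro C C' hCC'
    refine Summable.tsum_le_tsum (fun n => ?_) (h2summ C) (h2summ C')
    exact mul_le_mul_of_nonneg_right (cl_mono (by linarith)) (he0 n)
  have h2term_nonneg : ∀ (n : ℕ) (C : ℝ), 0 ≤ cl (C - n) * e n :=
    fun n C => mul_nonneg (cl_nonneg _) (he0 n)
  have h2zero : h₂ 0 = 0 := by
    rw [h2def]
    convert tsum_zero with n
    rw [cl_eq_zero (by simp [sub_nonpos]), zero_mul]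
  have h2nonneg : ∀ C, 0 ≤ h₂ C := fun C => tsum_nonneg (h2term_nonneg · C)
  have h2lb : ∀ C : ℝ, 1 ≤ C → m ((⌊C⌋₊:ℝ) + 1) - m 1 ≤ h₂ C := by
    intro C hC
    set p := ⌊C⌋₊ with hpdef
    have hpC : (p:ℝ) ≤ C := Nat.floor_le (by linarith)
    have hterm : ∀ k ∈ Finset.range p, cl (C - k) * e k = e k := by
      intro k hk
      rw [Finset.mem_range] at hk
      have : (k:ℝ) ≤ (p:ℝ) - 1 := by
        have : (k:ℝ) + 1 ≤ (p:ℝ) := by exact_mod_cast hk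
        linarith
      rw [cl_eq_one (by linarith), one_mul]
    have hsum : ∑ k ∈ Finset.range p, cl (C - k) * e k = m ((p:ℝ)+1) - m 1 := by
      rw [Finset.sum_congr rfl hterm]
      have := Finset.sum_range_sub (fun k : ℕ => m ((k:ℝ)+1)) p
      simp only [hedef]
      convert this using 2 with k
      · push_cast; ring_nf
      · norm_num
    calc m ((p:ℝ)+1) - m 1 = ∑ k ∈ Finset.range p, cl (C - k) * e k := hsum.symm
    _ ≤ h₂ C := Summable.sum_le_tsum _ (fun i _ => h2term_nonneg i C) (h2summ C)
  -- m is dominated by h₁ + h₂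
  have hm_le : ∀ C : ℝ, 0 ≤ C → m C ≤ h₁ C + h₂ C := by
    intro C hC
    rcases eq_or_lt_of_le hC with rfl | hCpos
    · have hm00 : m 0 ≤ 0 := by
        by_contra hcon
        push_neg at hcon
        obtain ⟨δ, hδ, hs⟩ := hsmall' (m 0 / 2) (by linarith)
        have := hs 0 le_rfl (le_of_lt hδ)
        linarith
      rw [h1zero, h2zero]
      linarith
    rcases le_or_gt 1 C with h1C | h1C
    · -- large C
      have hfl : C ≤ (⌊C⌋₊:ℝ) + 1 := le_of_lt (Nat.lt_floor_add_one C)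
      have hmC : m C ≤ m ((⌊C⌋₊:ℝ)+1) := hmono _ _ hC hfl
      have hb2 := h2lb C h1C
      have hb1 : a 0 ≤ h₁ C := h1lb 0 C (by norm_num; linarith)
      have ha0m : a 0 = m 1 := by simp [hadef]
      linarith
    · -- small C
      have hex : ∃ n : ℕ, (2⁻¹:ℝ)^(n+1) ≤ C := by
        obtain ⟨n, hn⟩ := exists_pow_lt_of_lt_one hCpos (by norm_num : (2⁻¹:ℝ) < 1)
        exact ⟨n, le_of_lt (lt_of_le_of_lt
          (pow_le_pow_of_le_one (by norm_num) (by norm_num) (by omega)) hn)⟩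
      obtain ⟨N, hspec, hmin⟩ : ∃ N : ℕ, (2⁻¹:ℝ)^(N+1) ≤ C ∧
          ∀ k < N, ¬((2⁻¹:ℝ)^(k+1) ≤ C) :=
        ⟨Nat.find hex, Nat.find_spec hex, fun k hk => Nat.find_min hex hk⟩
      have hCN : C ≤ (2⁻¹:ℝ)^N := by
        rcases N with _ | k
        · rw [pow_zero]; exact le_of_lt h1C
        · have := hmin k (Nat.lt_succ_self k)
          push_neg at this
          exact le_of_lt this
      have : m C ≤ a N := hmono _ _ hC hCN
      have := h1lb N C hspec
      have := h2nonneg C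
      linarith
  -- conclude
  set σ : ℝ → ℝ := fun s => h₁ s + h₂ s + s with hσdef
  have hσK : ClassKinf σ := by
    refine ⟨⟨((h1cont.add h2cont).add continuous_id).continuousOn, ?_, by
      simp only [hσdef]; rw [h1zero, h2zero]; ring⟩, fun c => ?_⟩
    · refine monoOn_add_strictMonoOn ?_ (fun x _ y _ h => h)
      exact ((h1mono.add h2mono).monotoneOn _)
    · refine ⟨max c 0, le_max_right _ _, ?_⟩
      simp only [hσdef]
      have := h1nonneg (max c 0)
      have := h2nonneg (max c 0)
      have := le_max_left c 0
      linarith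
  refine ⟨σ, σ, hσK, Or.inl hσK, fun t ht x u hu => ?_⟩
  have hb := hpt t ht x u hu
  have hmx := hm_le (max ‖x‖ (S.Unorm u)) (le_trans (norm_nonneg x) (le_max_left _ _))
  have hkey : h₁ (max ‖x‖ (S.Unorm u)) + h₂ (max ‖x‖ (S.Unorm u)) ≤
      (h₁ ‖x‖ + h₂ ‖x‖) + (h₁ (S.Unorm u) + h₂ (S.Unorm u)) := by
    rcases max_cases ‖x‖ (S.Unorm u) with ⟨hm, _⟩ | ⟨hm, _⟩ <;> rw [hm]
    · have := h1nonneg (S.Unorm u); have := h2nonneg (S.Unorm u); linarith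
    · have := h1nonneg ‖x‖; have := h2nonneg ‖x‖; linarith
  simp only [hσdef]
  have hxn := norm_nonneg x
  have hun := S.Unorm_nonneg u
  linarith


/-! ### ISS from ULIM and UGS : the main construction -/

lemma ISS_of_ULIM_UGS {S : ControlSystem X U} (hulim : S.ULIM) (hugs : S.UGS) : S.ISS := by
  classical
  obtain ⟨γL, hγL, hul⟩ := hulim.dom'
  obtain ⟨σ, γ₀, hσK, hγ₀, hugs₀⟩ := hugs
  obtain ⟨γh, hγh, hdγh⟩ := hγ₀.dom
  have hUGS : ∀ t : ℝ, 0 ≤ t → ∀ x : X, ∀ u ∈ S.inputs,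
      ‖S.phi t x u‖ ≤ σ ‖x‖ + γh (S.Unorm u) := by
    intro t ht x u hu
    have := hugs₀ t ht x u hu
    have := hdγh _ (S.Unorm_nonneg u)
    linarith
  set Γ : ℝ → ℝ := fun s => σ (2 * γL s) + γh s with hΓdef
  clear_value Γ
  have hΓmono : ∀ s s' : ℝ, 0 ≤ s → s ≤ s' → Γ s ≤ Γ s' := by
    intro s s' hs hss'
    have h1 : γL s ≤ γL s' := hγL.1.le_of_le hs hss'
    have h2 : σ (2 * γL s) ≤ σ (2 * γL s') :=
      hσK.1.le_of_le (by linarith [hγL.1.nonneg hs]) (by linarith)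
    have h3 : γh s ≤ γh s' := hγh.1.le_of_le hs hss'
    simp only [hΓdef]
    linarith
  have hγhΓ : ∀ s : ℝ, 0 ≤ s → γh s ≤ Γ s := by
    intro s hs
    have h1 := hσK.1.nonneg (by linarith [hγL.1.nonneg hs] : (0:ℝ) ≤ 2 * γL s)
    simp only [hΓdef]
    linarith
  -- Step A : reaching estimate with gain Γ
  have reach : ∀ ε : ℝ, 0 < ε → ∀ r : ℝ, 0 < r → ∃ τ : ℝ, 0 ≤ τ ∧
      ∀ x : X, ‖x‖ ≤ r → ∀ u ∈ S.inputs, ∀ t : ℝ, τ ≤ t →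
        ‖S.phi t x u‖ ≤ σ (2*ε) + Γ (S.Unorm u) := by
    intro ε hε r hr
    obtain ⟨τ, hτ0, hτ⟩ := hul ε hε r hr
    refine ⟨τ, hτ0, fun x hx u hu t ht => ?_⟩
    obtain ⟨t', ht'm, ht'⟩ := hτ x hx u hu
    have htt' : t' ≤ t := le_trans ht'm.2 ht
    have hsplit : S.phi t x u = S.phi (t - t') (S.phi t' x u) (fun s => u (s + t')) :=
      S.restart ht'm.1 htt' x hu
    have hb := hUGS (t - t') (by linarith) (S.phi t' x u) _ (S.shift_mem u hu t' ht'm.1)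
    have hσ1 : σ ‖S.phi t' x u‖ ≤ σ (ε + γL (S.Unorm u)) :=
      hσK.1.le_of_le (norm_nonneg _) ht'
    have hσ2 : σ (ε + γL (S.Unorm u)) ≤ σ (2*ε) + σ (2 * γL (S.Unorm u)) :=
      K_add_split hσK.1 (le_of_lt hε) (hγL.1.nonneg (S.Unorm_nonneg u))
    have hγ1 : γh (S.Unorm (fun s => u (s + t'))) ≤ γh (S.Unorm u) :=
      hγh.1.le_of_le (S.Unorm_nonneg _) (S.shift_norm u hu t' ht'm.1)
    rw [hsplit]
    simp only [hΓdef]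
    linarith
  -- Step B : reaching estimate with arbitrary ε
  have reach' : ∀ ε : ℝ, 0 < ε → ∀ r : ℝ, 0 < r → ∃ τ : ℝ, 0 ≤ τ ∧
      ∀ x : X, ‖x‖ ≤ r → ∀ u ∈ S.inputs, ∀ t : ℝ, τ ≤ t →
        ‖S.phi t x u‖ ≤ ε + Γ (S.Unorm u) := by
    intro ε hε r hr
    obtain ⟨δ, hδ, hsm⟩ := hσK.1.small hε
    obtain ⟨τ, hτ0, hτ⟩ := reach (δ/2) (by linarith) r hr
    refine ⟨τ, hτ0, fun x hx u hu t ht => ?_⟩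
    have := hτ x hx u hu t ht
    have hσs : σ (2*(δ/2)) ≤ ε := hsm _ (by linarith) (by linarith)
    linarith
  -- Step C : discretized reaching times
  have hpowpos : ∀ n : ℕ, (0:ℝ) < (2⁻¹:ℝ)^n := fun n => by positivity
  have hradpos : ∀ k : ℕ, (0:ℝ) < (k:ℝ)+1 := fun k => by positivity
  choose τ₀ hτ₀0 hτ₀ using fun n k : ℕ => reach' ((2⁻¹:ℝ)^n) (hpowpos n) ((k:ℝ)+1) (hradpos k)
  set T : ℕ → ℕ → ℝ := fun n k =>
    (n:ℝ) + 1 + ∑ i ∈ Finset.range (n+1), ∑ j ∈ Finset.range (k+1), τ₀ i j with hTdef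
  clear_value T
  have hsum_nonneg : ∀ n k : ℕ, 0 ≤ ∑ i ∈ Finset.range (n+1), ∑ j ∈ Finset.range (k+1), τ₀ i j :=
    fun n k => Finset.sum_nonneg fun i _ => Finset.sum_nonneg fun j _ => hτ₀0 i j
  have hTn : ∀ n k : ℕ, (n:ℝ) + 1 ≤ T n k := fun n k => by
    simp only [hTdef]; linarith [hsum_nonneg n k]
  have hTτ : ∀ n k : ℕ, τ₀ n k ≤ T n k := by
    intro n k
    have h1 : τ₀ n k ≤ ∑ j ∈ Finset.range (k+1), τ₀ n j :=
      Finset.single_le_sum (fun j _ => hτ₀0 n j) (Finset.self_mem_range_succ k)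
    have h2 : (∑ j ∈ Finset.range (k+1), τ₀ n j) ≤
        ∑ i ∈ Finset.range (n+1), ∑ j ∈ Finset.range (k+1), τ₀ i j :=
      Finset.single_le_sum (f := fun i => ∑ j ∈ Finset.range (k+1), τ₀ i j)
        (fun i _ => Finset.sum_nonneg fun j _ => hτ₀0 i j) (Finset.self_mem_range_succ n)
    simp only [hTdef]
    have : (0:ℝ) ≤ (n:ℝ) + 1 := by positivity
    linarith
  have hTmono_n : ∀ n n' k : ℕ, n ≤ n' → T n k ≤ T n' k := by
    intro n n' k hnn'
    simp only [hTdef]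
    have h1 : ((n:ℝ)) ≤ (n':ℝ) := by exact_mod_cast hnn'
    have h2 : (∑ i ∈ Finset.range (n+1), ∑ j ∈ Finset.range (k+1), τ₀ i j) ≤
        ∑ i ∈ Finset.range (n'+1), ∑ j ∈ Finset.range (k+1), τ₀ i j :=
      Finset.sum_le_sum_of_subset_of_nonneg
        (Finset.range_subset_range.mpr (by omega))
        (fun i _ _ => Finset.sum_nonneg fun j _ => hτ₀0 i j)
    linarith
  have hTmono_k : ∀ n k k' : ℕ, k ≤ k' → T n k ≤ T n k' := by
    intro n k k' hkk'
    simp only [hTdef]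
    have h2 : (∑ i ∈ Finset.range (n+1), ∑ j ∈ Finset.range (k+1), τ₀ i j) ≤
        ∑ i ∈ Finset.range (n+1), ∑ j ∈ Finset.range (k'+1), τ₀ i j := by
      refine Finset.sum_le_sum fun i _ => ?_
      exact Finset.sum_le_sum_of_subset_of_nonneg
        (Finset.range_subset_range.mpr (by omega)) (fun j _ _ => hτ₀0 i j)
    linarith
  -- the decay envelopes g k
  have hbase : Summable (fun n : ℕ => 2 * (2⁻¹:ℝ)^n) :=
    (summable_geometric_of_lt_one (by norm_num) (by norm_num)).mul_left 2
  set g : ℕ → ℝ → ℝ := fun k t => (σ ((k:ℝ)+1) + 1) * cl (T 0 k + 1 - t) +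
    ∑' n : ℕ, 2 * (2⁻¹:ℝ)^n * cl (T (n+1) k + 1 - t) with hgdef
  clear_value g
  have hσk1 : ∀ k : ℕ, 0 ≤ σ ((k:ℝ)+1) := fun k => hσK.1.nonneg (by positivity)
  have gterm_nonneg : ∀ (n : ℕ) (k : ℕ) (t : ℝ), 0 ≤ 2 * (2⁻¹:ℝ)^n * cl (T (n+1) k + 1 - t) :=
    fun n k t => mul_nonneg (by positivity) (cl_nonneg _)
  have gterm_le : ∀ (n : ℕ) (k : ℕ) (t : ℝ),
      2 * (2⁻¹:ℝ)^n * cl (T (n+1) k + 1 - t) ≤ 2 * (2⁻¹:ℝ)^n := fun n k t => by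
    calc 2 * (2⁻¹:ℝ)^n * cl (T (n+1) k + 1 - t) ≤ 2 * (2⁻¹:ℝ)^n * 1 :=
      mul_le_mul_of_nonneg_left (cl_le_one _) (by positivity)
    _ = 2 * (2⁻¹:ℝ)^n := mul_one _
  have gsumm : ∀ (k : ℕ) (t : ℝ), Summable (fun n : ℕ => 2 * (2⁻¹:ℝ)^n * cl (T (n+1) k + 1 - t)) :=
    fun k t => Summable.of_nonneg_of_le (fun n => gterm_nonneg n k t) (fun n => gterm_le n k t) hbase
  have gcont : ∀ k : ℕ, Continuous (g k) := by
    intro k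
    simp only [hgdef]
    refine Continuous.add (continuous_const.mul (continuous_cl.comp
      (continuous_const.sub continuous_id))) ?_
    refine continuous_tsum (fun n => ?_) hbase (fun n t => ?_)
    · exact continuous_const.mul (continuous_cl.comp (continuous_const.sub continuous_id))
    · rw [Real.norm_eq_abs, abs_of_nonneg (gterm_nonneg n k t)]
      exact gterm_le n k t
  have gnonneg : ∀ (k : ℕ) (t : ℝ), 0 ≤ g k t := by
    intro k t
    have h1 : 0 ≤ (σ ((k:ℝ)+1) + 1) * cl (T 0 k + 1 - t) :=
      mul_nonneg (by linarith [hσk1 k]) (cl_nonneg _)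
    have h2 : 0 ≤ ∑' n : ℕ, 2 * (2⁻¹:ℝ)^n * cl (T (n+1) k + 1 - t) :=
      tsum_nonneg (fun n => gterm_nonneg n k t)
    simp only [hgdef]
    linarith
  have ganti : ∀ (k : ℕ) (t t' : ℝ), t ≤ t' → g k t' ≤ g k t := by
    intro k t t' htt'
    have h1 : (σ ((k:ℝ)+1) + 1) * cl (T 0 k + 1 - t') ≤ (σ ((k:ℝ)+1) + 1) * cl (T 0 k + 1 - t) :=
      mul_le_mul_of_nonneg_left (cl_mono (by linarith)) (by linarith [hσk1 k])
    have h2 : (∑' n : ℕ, 2 * (2⁻¹:ℝ)^n * cl (T (n+1) k + 1 - t')) ≤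
        ∑' n : ℕ, 2 * (2⁻¹:ℝ)^n * cl (T (n+1) k + 1 - t) := by
      refine Summable.tsum_le_tsum (fun n => ?_) (gsumm k t') (gsumm k t)
      exact mul_le_mul_of_nonneg_left (cl_mono (by linarith)) (by positivity)
    simp only [hgdef]
    linarith
  have gmono_k : ∀ (k : ℕ) (t : ℝ), g k t ≤ g (k+1) t := by
    intro k t
    have hσm : σ ((k:ℝ)+1) ≤ σ (((k+1:ℕ):ℝ)+1) :=
      hσK.1.le_of_le (by positivity) (by push_cast; linarith)
    have h1 : (σ ((k:ℝ)+1) + 1) * cl (T 0 k + 1 - t) ≤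
        (σ (((k+1:ℕ):ℝ)+1) + 1) * cl (T 0 (k+1) + 1 - t) := by
      have hc1 : cl (T 0 k + 1 - t) ≤ cl (T 0 (k+1) + 1 - t) :=
        cl_mono (by linarith [hTmono_k 0 k (k+1) (by omega)])
      refine mul_le_mul (by linarith) hc1 (cl_nonneg _) (by linarith [hσk1 (k+1)])
    have h2 : (∑' n : ℕ, 2 * (2⁻¹:ℝ)^n * cl (T (n+1) k + 1 - t)) ≤
        ∑' n : ℕ, 2 * (2⁻¹:ℝ)^n * cl (T (n+1) (k+1) + 1 - t) := by
      refine Summable.tsum_le_tsum (fun n => ?_) (gsumm k t) (gsumm (k+1) t)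
      exact mul_le_mul_of_nonneg_left
        (cl_mono (by linarith [hTmono_k (n+1) k (k+1) (by omega)])) (by positivity)
    simp only [hgdef]
    linarith
  have glb1 : ∀ (k : ℕ) (t : ℝ), t ≤ T 0 k → σ ((k:ℝ)+1) + 1 ≤ g k t := by
    intro k t ht
    have h1 : cl (T 0 k + 1 - t) = 1 := cl_eq_one (by linarith)
    have h2 : 0 ≤ ∑' n : ℕ, 2 * (2⁻¹:ℝ)^n * cl (T (n+1) k + 1 - t) :=
      tsum_nonneg (fun n => gterm_nonneg n k t)
    simp only [hgdef, h1, mul_one]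
    linarith
  have glb2 : ∀ (n k : ℕ) (t : ℝ), t ≤ T (n+1) k → 2 * (2⁻¹:ℝ)^n ≤ g k t := by
    intro n k t ht
    have h1 : 2 * (2⁻¹:ℝ)^n * cl (T (n+1) k + 1 - t) = 2 * (2⁻¹:ℝ)^n := by
      rw [cl_eq_one (by linarith), mul_one]
    have h2 : 2 * (2⁻¹:ℝ)^n ≤ ∑' n' : ℕ, 2 * (2⁻¹:ℝ)^n' * cl (T (n'+1) k + 1 - t) := by
      rw [← h1]
      exact Summable.le_tsum (gsumm k t) n (fun j _ => gterm_nonneg j k t)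
    have h3 : 0 ≤ (σ ((k:ℝ)+1) + 1) * cl (T 0 k + 1 - t) :=
      mul_nonneg (by linarith [hσk1 k]) (cl_nonneg _)
    simp only [hgdef]
    linarith
  have gtend : ∀ k : ℕ, Tendsto (g k) atTop (nhds 0) := by
    intro k
    rw [Metric.tendsto_atTop]
    intro ε hε
    obtain ⟨N, hN⟩ := exists_pow_lt_of_lt_one (show (0:ℝ) < ε/8 by linarith)
      (by norm_num : (2⁻¹:ℝ) < 1)
    refine ⟨T (N+1) k + 1, fun t ht => ?_⟩
    have hfirst : cl (T 0 k + 1 - t) = 0 := by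
      refine cl_eq_zero ?_
      have := hTmono_n 0 (N+1) k (by omega)
      linarith
    have hvanish : ∀ i < N+1, 2 * (2⁻¹:ℝ)^i * cl (T (i+1) k + 1 - t) = 0 := by
      intro i hi
      have h1 : T (i+1) k ≤ T (N+1) k := hTmono_n (i+1) (N+1) k (by omega)
      rw [cl_eq_zero (by linarith), mul_zero]
    have htailsumm : Summable (fun i : ℕ => 2 * (2⁻¹:ℝ)^(i+(N+1))) := by
      have : ∀ i : ℕ, 2 * (2⁻¹:ℝ)^(i+(N+1)) = (2 * (2⁻¹:ℝ)^(N+1)) * (2⁻¹:ℝ)^i := by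
        intro i; rw [pow_add]; ring
      rw [summable_congr this]
      exact (summable_geometric_of_lt_one (by norm_num) (by norm_num)).mul_left _
    have hsplit : (∑ i ∈ Finset.range (N+1), 2 * (2⁻¹:ℝ)^i * cl (T (i+1) k + 1 - t)) +
        (∑' i : ℕ, 2 * (2⁻¹:ℝ)^(i+(N+1)) * cl (T (i+(N+1)+1) k + 1 - t)) =
        ∑' i : ℕ, 2 * (2⁻¹:ℝ)^i * cl (T (i+1) k + 1 - t) :=
      Summable.sum_add_tsum_nat_add (N+1) (gsumm k t)
    have hhead : (∑ i ∈ Finset.range (N+1), 2 * (2⁻¹:ℝ)^i * cl (T (i+1) k + 1 - t)) = 0 :=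
      Finset.sum_eq_zero (fun i hi => hvanish i (Finset.mem_range.mp hi))
    have htailsum : Summable (fun i : ℕ => 2 * (2⁻¹:ℝ)^(i+(N+1)) * cl (T (i+(N+1)+1) k + 1 - t)) :=
      Summable.of_nonneg_of_le (fun i => gterm_nonneg (i+(N+1)) k t)
        (fun i => gterm_le (i+(N+1)) k t) htailsumm
    have htail_le : (∑' i : ℕ, 2 * (2⁻¹:ℝ)^(i+(N+1)) * cl (T (i+(N+1)+1) k + 1 - t)) ≤
        ∑' i : ℕ, 2 * (2⁻¹:ℝ)^(i+(N+1)) :=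
      Summable.tsum_le_tsum (fun i => gterm_le (i+(N+1)) k t) htailsum htailsumm
    have htailval : (∑' i : ℕ, 2 * (2⁻¹:ℝ)^(i+(N+1))) = 4 * (2⁻¹:ℝ)^(N+1) := by
      have heq : ∀ i : ℕ, 2 * (2⁻¹:ℝ)^(i+(N+1)) = (2 * (2⁻¹:ℝ)^(N+1)) * (2⁻¹:ℝ)^i := by
        intro i; rw [pow_add]; ring
      rw [tsum_congr heq, tsum_mul_left, tsum_geometric_of_lt_one (by norm_num) (by norm_num)]
      norm_num
      ring
    have hgsmall : g k t ≤ 4 * (2⁻¹:ℝ)^(N+1) := by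
      have hts : (∑' i : ℕ, 2 * (2⁻¹:ℝ)^i * cl (T (i+1) k + 1 - t)) ≤ 4 * (2⁻¹:ℝ)^(N+1) := by
        rw [← hsplit, hhead, zero_add, ← htailval]
        exact htail_le
      simp only [hgdef, hfirst, mul_zero, zero_add]
      exact hts
    rw [Real.dist_eq, sub_zero, abs_of_nonneg (gnonneg k t)]
    have hN2 : (4:ℝ) * (2⁻¹:ℝ)^(N+1) < ε := by
      have h2 : (2⁻¹:ℝ)^(N+1) ≤ (2⁻¹:ℝ)^N :=
        pow_le_pow_of_le_one (by norm_num) (by norm_num) (by omega)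
      calc (4:ℝ) * (2⁻¹:ℝ)^(N+1) ≤ 4 * (2⁻¹:ℝ)^N := by linarith
      _ < 4 * (ε/8) := by linarith
      _ < ε := by linarith
    linarith
  -- the key trajectory bound for g
  have gbound : ∀ (k : ℕ) (x : X), ∀ u ∈ S.inputs, ∀ t : ℝ, ‖x‖ ≤ (k:ℝ)+1 → 0 ≤ t →
      ‖S.phi t x u‖ ≤ g k t + Γ (S.Unorm u) := by
    intro k x u hu t hx ht
    rcases le_or_gt t (T 0 k) with h1 | h1
    · have hb := hUGS t ht x u hu
      have hσm : σ ‖x‖ ≤ σ ((k:ℝ)+1) := hσK.1.le_of_le (norm_nonneg x) hx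
      have := glb1 k t h1
      have := hγhΓ _ (S.Unorm_nonneg u)
      linarith
    · have hex : ∃ n : ℕ, t < T (n+1) k := by
        obtain ⟨n, hn⟩ := exists_nat_gt t
        refine ⟨n, lt_of_lt_of_le hn ?_⟩
        have := hTn (n+1) k
        have hc : ((n:ℝ)) ≤ ((n+1:ℕ):ℝ) := by exact_mod_cast (show n ≤ n+1 by omega)
        push_cast at this hc ⊢
        linarith
      obtain ⟨N, hspec, hmin⟩ : ∃ N : ℕ, t < T (N+1) k ∧ ∀ p < N, ¬(t < T (p+1) k) :=
        ⟨Nat.find hex, Nat.find_spec hex, fun p hp => Nat.find_min hex hp⟩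
      have hTN : T N k ≤ t := by
        rcases N with _ | p
        · exact le_of_lt h1
        · have := hmin p (Nat.lt_succ_self p)
          push_neg at this
          exact this
      have hτN : τ₀ N k ≤ t := le_trans (hTτ N k) hTN
      have hb := hτ₀ N k x hx u hu t hτN
      have hg := glb2 N k t (le_of_lt hspec)
      have hp : (2⁻¹:ℝ)^N ≤ 2 * (2⁻¹:ℝ)^N := by linarith [le_of_lt (hpowpos N)]
      linarith
  -- interpolation in the radius variable
  set G : ℝ → ℝ → ℝ := fun r t => g 0 t + ∑' k : ℕ, cl (r - k) * (g (k+1) t - g k t)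
    with hGdef
  clear_value G
  have Gsupp : ∀ (r t : ℝ) (K : ℕ), r ≤ K →
      ∀ k ∉ Finset.range K, cl (r - (k:ℝ)) * (g (k+1) t - g k t) = 0 := by
    intro r t K hrK k hk
    rw [Finset.mem_range, not_lt] at hk
    have : (K:ℝ) ≤ k := by exact_mod_cast hk
    rw [cl_eq_zero (by linarith), zero_mul]
  have Gsumm : ∀ (r t : ℝ), Summable (fun k : ℕ => cl (r - k) * (g (k+1) t - g k t)) := by
    intro r t
    obtain ⟨K, hK⟩ := exists_nat_ge r
    exact summable_of_ne_finset_zero (Gsupp r t K hK)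
  -- closed form of the interpolation
  have Gcf : ∀ (r t : ℝ), 0 ≤ r →
      G r t = (1 - (r - (⌊r⌋₊:ℝ))) * g (⌊r⌋₊) t + (r - (⌊r⌋₊:ℝ)) * g (⌊r⌋₊+1) t := by
    intro r t hr
    have hmle : ((⌊r⌋₊:ℝ)) ≤ r := Nat.floor_le hr
    have hmlt : r < (⌊r⌋₊:ℝ) + 1 := Nat.lt_floor_add_one r
    have hfin : (∑' k : ℕ, cl (r - k) * (g (k+1) t - g k t)) =
        ∑ k ∈ Finset.range (⌊r⌋₊+1), cl (r - k) * (g (k+1) t - g k t) := by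
      refine tsum_eq_sum ?_
      intro k hk
      rw [Finset.mem_range, not_lt] at hk
      have : ((⌊r⌋₊:ℝ)) + 1 ≤ (k:ℝ) := by exact_mod_cast hk
      rw [cl_eq_zero (by linarith), zero_mul]
    have hones : ∀ k ∈ Finset.range (⌊r⌋₊), cl (r - (k:ℝ)) * (g (k+1) t - g k t) =
        g (k+1) t - g k t := by
      intro k hk
      rw [Finset.mem_range] at hk
      have : (k:ℝ) + 1 ≤ (⌊r⌋₊:ℝ) := by exact_mod_cast hk
      rw [cl_eq_one (by linarith), one_mul]
    have hlast : cl (r - (⌊r⌋₊:ℝ)) = r - (⌊r⌋₊:ℝ) :=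
      cl_eq_self (by linarith) (by linarith)
    have htel : (∑ k ∈ Finset.range (⌊r⌋₊), (g (k+1) t - g k t)) = g (⌊r⌋₊) t - g 0 t :=
      Finset.sum_range_sub (fun k => g k t) (⌊r⌋₊)
    simp only [hGdef]
    rw [hfin, Finset.sum_range_succ, Finset.sum_congr rfl hones, htel, hlast]
    ring
  have Gcont : Continuous (fun p : ℝ × ℝ => G p.1 p.2) := by
    rw [continuous_iff_continuousAt]
    intro p
    obtain ⟨K, hK⟩ := exists_nat_gt p.1
    have hop : {q : ℝ × ℝ | q.1 < K} ∈ nhds p :=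
      (isOpen_lt continuous_fst continuous_const).mem_nhds hK
    have heq : (fun q : ℝ × ℝ => G q.1 q.2) =ᶠ[nhds p]
        (fun q : ℝ × ℝ => g 0 q.2 + ∑ k ∈ Finset.range K, cl (q.1 - k) * (g (k+1) q.2 - g k q.2)) := by
      filter_upwards [hop] with q hq
      simp only [hGdef]
      rw [tsum_eq_sum (Gsupp q.1 q.2 K (le_of_lt hq))]
    refine ContinuousAt.congr ?_ heq.symm
    refine ContinuousAt.add (((gcont 0).comp continuous_snd).continuousAt) ?_
    refine Continuous.continuousAt (continuous_finset_sum _ (fun k _ => ?_))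
    exact ((continuous_cl.comp (continuous_fst.sub continuous_const)).mul
      (((gcont (k+1)).comp continuous_snd).sub ((gcont k).comp continuous_snd)))
  have Gmono_r : ∀ (t : ℝ), Monotone (fun r => G r t) := by
    intro t r r' hrr'
    simp only [hGdef]
    have := Summable.tsum_le_tsum (f := fun k : ℕ => cl (r - k) * (g (k+1) t - g k t))
      (g := fun k : ℕ => cl (r' - k) * (g (k+1) t - g k t))
      (fun k => mul_le_mul_of_nonneg_right (cl_mono (by linarith)) (by linarith [gmono_k k t]))
      (Gsumm r t) (Gsumm r' t)
    linarith
  have Gfloor : ∀ (r t : ℝ), 0 ≤ r → g (⌊r⌋₊) t ≤ G r t := by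
    intro r t hr
    rw [Gcf r t hr]
    have hθ1 : (0:ℝ) ≤ r - (⌊r⌋₊:ℝ) := by linarith [Nat.floor_le hr]
    nlinarith [gmono_k (⌊r⌋₊) t]
  have Gnonneg : ∀ (r t : ℝ), 0 ≤ r → 0 ≤ G r t := by
    intro r t hr
    exact le_trans (gnonneg (⌊r⌋₊) t) (Gfloor r t hr)
  have Ganti : ∀ (r : ℝ), 0 ≤ r → ∀ t t' : ℝ, t ≤ t' → G r t' ≤ G r t := by
    intro r hr t t' htt'
    rw [Gcf r t hr, Gcf r t' hr]
    have hθ1 : (0:ℝ) ≤ r - (⌊r⌋₊:ℝ) := by linarith [Nat.floor_le hr]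
    have hθ2 : r - (⌊r⌋₊:ℝ) ≤ 1 := by linarith [le_of_lt (Nat.lt_floor_add_one r)]
    have h1 := ganti (⌊r⌋₊) t t' htt'
    have h2 := ganti (⌊r⌋₊+1) t t' htt'
    nlinarith
  have Gtend : ∀ (r : ℝ), 0 ≤ r → Tendsto (G r) atTop (nhds 0) := by
    intro r hr
    have hub : ∀ t : ℝ, G r t ≤ g (⌊r⌋₊) t + g (⌊r⌋₊+1) t := by
      intro t
      rw [Gcf r t hr]
      have hθ1 : (0:ℝ) ≤ r - (⌊r⌋₊:ℝ) := by linarith [Nat.floor_le hr]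
      have hθ2 : r - (⌊r⌋₊:ℝ) ≤ 1 := by linarith [le_of_lt (Nat.lt_floor_add_one r)]
      nlinarith [gnonneg (⌊r⌋₊) t, gnonneg (⌊r⌋₊+1) t]
    have hlim : Tendsto (fun t => g (⌊r⌋₊) t + g (⌊r⌋₊+1) t) atTop (nhds 0) := by
      have := (gtend (⌊r⌋₊)).add (gtend (⌊r⌋₊+1))
      simpa using this
    exact squeeze_zero (fun t => Gnonneg r t hr) hub hlim
  have Gbound : ∀ (x : X), ∀ u ∈ S.inputs, ∀ t : ℝ, 0 ≤ t →
      ‖S.phi t x u‖ ≤ G ‖x‖ t + Γ (S.Unorm u) := by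
    intro x u hu t ht
    have hx : ‖x‖ ≤ ((⌊‖x‖⌋₊:ℝ)) + 1 := le_of_lt (Nat.lt_floor_add_one _)
    have h1 := gbound (⌊‖x‖⌋₊) x u hu t hx ht
    have h2 := Gfloor ‖x‖ t (norm_nonneg x)
    linarith
  -- assembling β and the gain
  refine ⟨fun r t => min (σ r) (G r t) + r * Real.exp (-t),
    fun s => Γ s + s, ⟨?_, ?_, ?_⟩, ⟨?_, ?_, ?_⟩, ?_⟩
  · -- joint continuity
    have c1 : ContinuousOn (fun p : ℝ × ℝ => σ p.1) (Ici 0 ×ˢ Ici 0) :=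
      hσK.1.1.comp continuous_fst.continuousOn (fun p hp => hp.1)
    have c2 : ContinuousOn (fun p : ℝ × ℝ => G p.1 p.2) (Ici 0 ×ˢ Ici 0) :=
      Gcont.continuousOn
    have c3 : ContinuousOn (fun p : ℝ × ℝ => p.1 * Real.exp (-p.2)) (Ici 0 ×ˢ Ici 0) :=
      (continuous_fst.mul ((Real.continuous_exp).comp continuous_snd.neg)).continuousOn
    exact (continuousOn_min c1 c2).add c3
  · -- ClassK in the first variable
    intro t ht
    refine ⟨?_, ?_, ?_⟩
    · have c1 : ContinuousOn (fun r : ℝ => G r t) (Ici 0) :=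
        (Gcont.comp (continuous_id.prodMk continuous_const)).continuousOn
      exact (continuousOn_min hσK.1.1 c1).add ((continuous_id.mul continuous_const).continuousOn)
    · refine monoOn_add_strictMonoOn ?_ ?_
      · intro r hr r' hr' hrr'
        exact min_le_min (hσK.1.le_of_le hr hrr') (Gmono_r t hrr')
      · intro r _ r' _ hrr'
        exact mul_lt_mul_of_pos_right hrr' (Real.exp_pos _)
    · have h1 : min (σ 0) (G 0 t) = 0 := by
        rw [hσK.1.2.2]
        exact min_eq_left (Gnonneg 0 t le_rfl)
      show min (σ 0) (G 0 t) + 0 * Real.exp (-t) = 0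
      rw [h1]; ring
  · -- ClassL in the second variable
    intro r hr
    constructor
    · refine antitoneOn_add_strictAntiOn ?_ ?_
      · intro t _ t' _ htt'
        exact min_le_min le_rfl (Ganti r (le_of_lt hr) t t' htt')
      · intro t _ t' _ htt'
        have := Real.exp_lt_exp.mpr (neg_lt_neg htt')
        exact mul_lt_mul_of_pos_left this hr
    · have hmin : Tendsto (fun t => min (σ r) (G r t)) atTop (nhds 0) := by
        have := Filter.Tendsto.min (tendsto_const_nhds (x := σ r)) (Gtend r (le_of_lt hr))
        rwa [min_eq_right (hσK.1.nonneg (le_of_lt hr))] at this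
      have hexp : Tendsto (fun t : ℝ => r * Real.exp (-t)) atTop (nhds 0) := by
        have := Real.tendsto_exp_neg_atTop_nhds_zero.const_mul r
        simpa using this
      have := hmin.add hexp
      simpa using this
  · -- continuity of the gain
    have c1 : ContinuousOn (fun s : ℝ => σ (2 * γL s)) (Ici 0) := by
      refine hσK.1.1.comp (continuousOn_const.mul hγL.1.1) (fun s hs => ?_)
      have := hγL.1.nonneg hs
      simp only [mem_Ici]
      linarith
    simp only [hΓdef]
    exact ((c1.add hγh.1.1).add continuousOn_id)
  · -- strict monotonicity of the gain
    refine monoOn_add_strictMonoOn ?_ (fun a _ b _ h => h)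
    intro s hs s' hs' hss'
    exact hΓmono s s' hs hss'
  · -- gain vanishes at zero
    have h1 : γL 0 = 0 := hγL.1.2.2
    have h2 : γh 0 = 0 := hγh.1.2.2
    show Γ 0 + 0 = 0
    simp only [hΓdef]
    rw [h1, mul_zero, hσK.1.2.2, h2]
    ring
  · -- the ISS estimate
    intro x u hu t ht
    show ‖S.phi t x u‖ ≤ min (σ ‖x‖) (G ‖x‖ t) + ‖x‖ * Real.exp (-t) + (Γ (S.Unorm u) + S.Unorm u)
    have b1 := hUGS t ht x u hu
    have b2 := Gbound x u hu t ht
    have hxe : 0 ≤ ‖x‖ * Real.exp (-t) := by positivity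
    have hun := S.Unorm_nonneg u
    have hγhle := hγhΓ _ (S.Unorm_nonneg u)
    rcases min_cases (σ ‖x‖) (G ‖x‖ t) with ⟨hm, _⟩ | ⟨hm, _⟩ <;> rw [hm]
    · linarith
    · linarith

/-- **Characterization of ISS** (Theorem: ISS ⇔ UAG ∧ CEP ∧ BRS ⇔ ULIM ∧ ULS ∧ BRS
⇔ ULIM ∧ UGS) for forward complete control systems. -/
theorem iss_superposition (S : ControlSystem X U) :
    (S.ISS ↔ S.UAG ∧ S.CEP ∧ S.BRS) ∧
    (S.ISS ↔ S.ULIM ∧ S.ULS ∧ S.BRS) ∧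
    (S.ISS ↔ S.ULIM ∧ S.UGS) := by
  refine ⟨⟨fun h => ⟨h.toUAG, h.toCEP, h.toBRS⟩, ?_⟩,
    ⟨fun h => ⟨h.toULIM, h.toUGS.toULS, h.toBRS⟩, ?_⟩,
    ⟨fun h => ⟨h.toULIM, h.toUGS⟩, fun h => ISS_of_ULIM_UGS h.1 h.2⟩⟩
  · rintro ⟨h1, h2, h3⟩
    exact ISS_of_ULIM_UGS h1.toULIM (UGS_construct (bnd h1.toULIM h3) (UAG_CEP_toSML h1 h2))
  · rintro ⟨h1, h2, h3⟩
    exact ISS_of_ULIM_UGS h1 (UGS_construct (bnd h1 h3) h2.toSML)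

end ControlSystem
end

section
/- If a forward complete control system Σ=(X,𝒰,φ) has the uniform asymptotic gain (UAG) property and is continuous at the equilibrium (CEP), then Σ is uniformly locally stable (ULS). -/
open Set Filter

namespace ControlSystem

variable {X U : Type*} [NormedAddCommGroup X] [NormedSpace ℝ X] [Zero U]

/-- If a forward complete control system is UAG and CEP, then it is ULS. -/
theorem UAG.toULS (S : ControlSystem X U) (h1 : S.UAG) (h2 : S.CEP) : S.ULS := by
  obtain ⟨γ, hγ, hUAG⟩ := h1
  obtain ⟨-, hCEP⟩ := h2
  -- γ is nonnegative on nonnegative arguments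
  have hγnn : ∀ s : ℝ, 0 ≤ s → 0 ≤ γ s := by
    intro s hs
    rcases hγ with ⟨⟨_, hmono, h0⟩, -⟩ | hz
    · calc (0:ℝ) = γ 0 := h0.symm
        _ ≤ γ s := hmono.monotoneOn (mem_Ici.mpr le_rfl) (mem_Ici.mpr hs) hs
    · exact (hz s hs).ge
  -- combined UAG + CEP estimate
  have key : ∀ ε : ℝ, 0 < ε → ∃ δ : ℝ, 0 < δ ∧
      ∀ t, 0 ≤ t → ∀ x : X, ‖x‖ ≤ δ → ∀ u ∈ S.inputs, S.Unorm u ≤ δ →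
        ‖S.phi t x u‖ ≤ ε + γ (S.Unorm u) := by
    intro ε hε
    obtain ⟨τ, hτ0, hτ⟩ := hUAG ε hε 1 one_pos
    obtain ⟨δ, hδ0, hδ⟩ := hCEP ε hε (τ + 1) (by linarith)
    refine ⟨min δ (1/2), by positivity, ?_⟩
    intro t ht x hx u hu hun
    rcases le_or_gt t τ with h | h
    · have h1 := hδ t ⟨ht, by linarith⟩ x (hx.trans (min_le_left _ _)) u hu
        (hun.trans (min_le_left _ _))
      have h2 := hγnn _ (S.Unorm_nonneg u)
      linarith
    · exact hτ u hu x (lt_of_le_of_lt (hx.trans (min_le_right _ _)) (by norm_num)) t h.le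
  obtain ⟨δ₁, hδ₁0, hδ₁⟩ := key 1 one_pos
  -- the auxiliary set and sup function g
  set A : ℝ → Set ℝ := fun s =>
    insert 0 {v : ℝ | ∃ t, 0 ≤ t ∧ ∃ x : X, ∃ u ∈ S.inputs,
      ‖x‖ ≤ min s δ₁ ∧ S.Unorm u ≤ min s δ₁ ∧ v = ‖S.phi t x u‖ - γ (S.Unorm u)} with hA
  have hAne : ∀ s, (A s).Nonempty := fun s => ⟨0, mem_insert _ _⟩
  have hAbd : ∀ s, ∀ v ∈ A s, v ≤ 1 := by
    intro s v hv
    rcases hv with rfl | ⟨t, ht, x, u, hu, hx, hun, rfl⟩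
    · norm_num
    · have := hδ₁ t ht x (hx.trans (min_le_right _ _)) u hu (hun.trans (min_le_right _ _))
      linarith
  have hAbdd : ∀ s, BddAbove (A s) := fun s => ⟨1, fun v hv => hAbd s v hv⟩
  set g : ℝ → ℝ := fun s => sSup (A s) with hgdef
  have gmono : Monotone g := by
    intro a b hab
    refine csSup_le_csSup (hAbdd b) (hAne a) ?_
    rintro v (rfl | ⟨t, ht, x, u, hu, hx, hun, rfl⟩)
    · exact mem_insert _ _
    · exact Or.inr ⟨t, ht, x, u, hu,
        hx.trans (min_le_min_right _ hab), hun.trans (min_le_min_right _ hab), rfl⟩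
  have gnn : ∀ s, 0 ≤ g s := fun s => le_csSup (hAbdd s) (mem_insert _ _)
  have gsmall : ∀ ε : ℝ, 0 < ε → ∃ δ : ℝ, 0 < δ ∧ ∀ s, s ≤ δ → g s ≤ ε := by
    intro ε hε
    obtain ⟨δ, hδ0, hδ⟩ := key ε hε
    refine ⟨δ, hδ0, fun s hs => csSup_le (hAne s) ?_⟩
    rintro v (rfl | ⟨t, ht, x, u, hu, hx, hun, rfl⟩)
    · exact hε.le
    · have := hδ t ht x (hx.trans ((min_le_left _ _).trans hs)) u hu
        (hun.trans ((min_le_left _ _).trans hs))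
      linarith
  have g0 : g 0 = 0 := by
    refine le_antisymm ?_ (gnn 0)
    refine le_of_forall_pos_le_add ?_
    intro ε hε
    obtain ⟨δ, hδ0, hδ⟩ := gsmall ε hε
    have := hδ 0 hδ0.le
    linarith
  -- the main pointwise bound
  have gmaj : ∀ t, 0 ≤ t → ∀ x : X, ‖x‖ ≤ δ₁ → ∀ u ∈ S.inputs, S.Unorm u ≤ δ₁ →
      ‖S.phi t x u‖ ≤ g ‖x‖ + g (S.Unorm u) + γ (S.Unorm u) := by
    intro t ht x hx u hu hun
    set m := max ‖x‖ (S.Unorm u) with hm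
    have hv : ‖S.phi t x u‖ - γ (S.Unorm u) ∈ A m :=
      Or.inr ⟨t, ht, x, u, hu, le_min (le_max_left _ _) hx,
        le_min (le_max_right _ _) hun, rfl⟩
    have h1 : ‖S.phi t x u‖ - γ (S.Unorm u) ≤ g m := le_csSup (hAbdd m) hv
    have h2 : g m ≤ g ‖x‖ + g (S.Unorm u) := by
      rcases max_cases ‖x‖ (S.Unorm u) with ⟨he, -⟩ | ⟨he, -⟩ <;> rw [hm, he]
      · linarith [gnn (S.Unorm u)]
      · linarith [gnn ‖x‖]
    linarith
  -- integrability facts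
  have gint : ∀ a b : ℝ, IntervalIntegrable g MeasureTheory.volume a b :=
    fun a b => gmono.intervalIntegrable
  have gsint : ∀ s : ℝ, 0 ≤ s → ∀ a b : ℝ,
      IntervalIntegrable (fun τ => g (s * τ)) MeasureTheory.volume a b := by
    intro s hs a b
    exact (gmono.comp (fun p q (hpq : p ≤ q) => mul_le_mul_of_nonneg_left hpq hs)).intervalIntegrable
  -- the smoothed majorant
  set I : ℝ → ℝ := fun s => ∫ τ in (1:ℝ)..2, g (s * τ) with hIdef
  have Inn : ∀ s : ℝ, 0 ≤ s → 0 ≤ I s := by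
    intro s hs
    exact intervalIntegral.integral_nonneg (by norm_num) (fun τ _ => gnn _)
  have Imono : ∀ a b : ℝ, 0 ≤ a → a ≤ b → I a ≤ I b := by
    intro a b ha hab
    refine intervalIntegral.integral_mono_on (by norm_num) (gsint a ha 1 2)
      (gsint b (ha.trans hab) 1 2) ?_
    intro τ hτ
    exact gmono (mul_le_mul_of_nonneg_right hab (by linarith [hτ.1]))
  have gleI : ∀ s : ℝ, 0 ≤ s → g s ≤ I s := by
    intro s hs
    have : (∫ τ in (1:ℝ)..2, g s) ≤ I s := by
      refine intervalIntegral.integral_mono_on (by norm_num) intervalIntegrable_const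
        (gsint s hs 1 2) ?_
      intro τ hτ
      exact gmono (by nlinarith [hτ.1])
    rwa [intervalIntegral.integral_const, show ((2:ℝ) - 1) = 1 by norm_num, one_smul] at this
  have I0 : I 0 = 0 := by
    have : I 0 = ∫ τ in (1:ℝ)..2, (0:ℝ) := by
      simp [hIdef, g0]
    rw [this, intervalIntegral.integral_zero]
  have IleG : ∀ s : ℝ, 0 ≤ s → I s ≤ g (s * 2) := by
    intro s hs
    have : I s ≤ ∫ τ in (1:ℝ)..2, g (s * 2) := by
      refine intervalIntegral.integral_mono_on (by norm_num) (gsint s hs 1 2)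
        intervalIntegrable_const ?_
      intro τ hτ
      exact gmono (mul_le_mul_of_nonneg_left hτ.2 hs)
    rwa [intervalIntegral.integral_const, show ((2:ℝ) - 1) = 1 by norm_num, one_smul] at this
  set σ : ℝ → ℝ := fun s => s + I s with hσdef
  have σ0 : σ 0 = 0 := by rw [hσdef]; simp [I0]
  -- continuity of I on Ici 0
  have Fcont : Continuous (fun b => ∫ x in (0:ℝ)..b, g x) :=
    intervalIntegral.continuous_primitive gint 0
  have Ieq : ∀ s : ℝ, s ≠ 0 →
      I s = s⁻¹ * ((∫ x in (0:ℝ)..(s*2), g x) - ∫ x in (0:ℝ)..(s*1), g x) := by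
    intro s hs
    have hadd := intervalIntegral.integral_add_adjacent_intervals (gint 0 (s*1)) (gint (s*1) (s*2))
    have hcomp := intervalIntegral.integral_comp_mul_left g hs (a := (1:ℝ)) (b := 2)
    simp only [hIdef]
    simp only [smul_eq_mul] at hcomp
    rw [hcomp]
    have : (∫ x in (s*1)..(s*2), g x) = (∫ x in (0:ℝ)..(s*2), g x) - ∫ x in (0:ℝ)..(s*1), g x := by
      linarith
    rw [this]
  have Icont : ContinuousOn I (Ici 0) := by
    intro s hs
    rcases eq_or_lt_of_le (mem_Ici.mp hs) with h | h
    · -- continuity at 0 within Ici 0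
      rw [ContinuousWithinAt, ← h, I0]
      rw [Metric.tendsto_nhdsWithin_nhds]
      intro ε hε
      obtain ⟨δ, hδ0, hδ⟩ := gsmall (ε/2) (by linarith)
      refine ⟨min (δ/2) (ε/2), by positivity, ?_⟩
      intro x hx hd
      rw [Real.dist_eq, sub_zero] at hd ⊢
      have hx0 : 0 ≤ x := hx
      have hxd : x < min (δ/2) (ε/2) := by
        rwa [abs_of_nonneg hx0] at hd
      have h1 : I x ≤ g (x * 2) := IleG x hx0
      have h2 : g (x * 2) ≤ ε/2 := by
        refine hδ _ ?_
        have := lt_of_lt_of_le hxd (min_le_left _ _)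
        linarith
      have h3 : 0 ≤ I x := Inn x hx0
      rw [abs_of_nonneg h3]
      linarith
    · -- continuity at s > 0
      have : ContinuousAt I s := by
        have hC : ContinuousAt (fun t : ℝ =>
            t⁻¹ * ((∫ x in (0:ℝ)..(t*2), g x) - ∫ x in (0:ℝ)..(t*1), g x)) s := by
          refine ContinuousAt.mul (continuousAt_inv₀ (ne_of_gt h)) ?_
          exact ((Fcont.comp (continuous_id.mul continuous_const)).sub
            (Fcont.comp (continuous_id.mul continuous_const))).continuousAt
        refine hC.congr ?_
        have hmem : Ioi (0:ℝ) ∈ nhds s := Ioi_mem_nhds h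
        filter_upwards [hmem] with t ht
        exact (Ieq t (ne_of_gt ht)).symm
      exact this.continuousWithinAt
  have σcont : ContinuousOn σ (Ici 0) := fun s hs =>
    (continuousWithinAt_id.add (Icont s hs))
  have σmono : StrictMonoOn σ (Ici 0) := by
    intro a ha b hb hab
    have := Imono a b (mem_Ici.mp ha) hab.le
    simp only [hσdef]
    linarith
  have σKinf : ClassKinf σ := by
    refine ⟨⟨σcont, σmono, σ0⟩, ?_⟩
    intro c
    refine ⟨max c 0, le_max_right _ _, ?_⟩
    have h1 : 0 ≤ I (max c 0) := Inn _ (le_max_right _ _)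
    have h2 : c ≤ max c 0 := le_max_left _ _
    simp only [hσdef]
    linarith
  -- the gain
  set γ' : ℝ → ℝ := fun s => γ s + σ s with hγ'def
  have γ'Kinf : ClassKinf γ' := by
    rcases hγ with ⟨⟨hcont, hmono, h0⟩, hub⟩ | hz
    · refine ⟨⟨hcont.add σcont, ?_, by simp [hγ'def, h0, σ0]⟩, ?_⟩
      · intro a ha b hb hab
        exact add_lt_add (hmono ha hb hab) (σmono ha hb hab)
      · intro c
        refine ⟨max c 0, le_max_right _ _, ?_⟩
        have h1 := hγnn (max c 0) (le_max_right _ _)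
        have h2 : 0 ≤ I (max c 0) := Inn _ (le_max_right _ _)
        have h3 : c ≤ max c 0 := le_max_left _ _
        simp only [hγ'def, hσdef]
        linarith
    · have heq : EqOn γ' σ (Ici 0) := by
        intro s hs
        simp [hγ'def, hz s (mem_Ici.mp hs)]
      refine ⟨⟨σcont.congr heq, ?_, by simp [hγ'def, hz 0 le_rfl, σ0]⟩, ?_⟩
      · intro a ha b hb hab
        rw [heq ha, heq hb]
        exact σmono ha hb hab
      · intro c
        obtain ⟨r, hr, hcr⟩ := σKinf.2 c
        exact ⟨r, hr, by rwa [heq (mem_Ici.mpr hr)]⟩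
  refine ⟨σ, γ', σKinf, Or.inl γ'Kinf, δ₁, hδ₁0, ?_⟩
  intro t ht x hx u hu hun
  have h1 := gmaj t ht x hx u hu hun
  have h2 : g ‖x‖ ≤ σ ‖x‖ := by
    have := gleI ‖x‖ (norm_nonneg x)
    simp only [hσdef]
    linarith [norm_nonneg x]
  have h3 : g (S.Unorm u) ≤ σ (S.Unorm u) := by
    have := gleI (S.Unorm u) (S.Unorm_nonneg u)
    simp only [hσdef]
    linarith [S.Unorm_nonneg u]
  simp only [hγ'def]
  linarith

end ControlSystem
end

section
/- If a forward complete control system Σ=(X,𝒰,φ) has bounded reachability sets (BRS) and has the uniform limit property (ULIM), then Σ is uniformly globally bounded (UGB). -/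
open Set Filter

namespace ControlSystem

variable {X U : Type*} [NormedAddCommGroup X] [NormedSpace ℝ X] [Zero U]

/-- Uniform global boundedness. -/
def UGB (S : ControlSystem X U) : Prop :=
  ∃ σ γ c, ClassKinf σ ∧ ClassKinf0 γ ∧ (0:ℝ) < c ∧
    ∀ t : ℝ, 0 ≤ t → ∀ x : X, ∀ u ∈ S.inputs,
      ‖S.phi t x u‖ ≤ σ ‖x‖ + γ (S.Unorm u) + c


private lemma classK0_zero {γ : ℝ → ℝ} (h : ClassK0 γ) : γ 0 = 0 := by
  rcases h with ⟨_, _, hz⟩ | hz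
  · exact hz
  · exact hz 0 le_rfl

private lemma classK0_mono {γ : ℝ → ℝ} (h : ClassK0 γ) {a b : ℝ} (ha : 0 ≤ a) (hab : a ≤ b) :
    γ a ≤ γ b := by
  rcases h with ⟨_, hm, _⟩ | hz
  · exact hm.monotoneOn ha (ha.trans hab) hab
  · rw [hz a ha, hz b (ha.trans hab)]

private lemma classK0_nonneg {γ : ℝ → ℝ} (h : ClassK0 γ) {a : ℝ} (ha : 0 ≤ a) : 0 ≤ γ a := by
  have := classK0_mono h le_rfl ha
  rwa [classK0_zero h] at this

/-- Any monotone nonnegative sequence is dominated, at `⌈m⌉₊`, by a `K∞` function plus a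
positive constant. -/
private lemma exists_kinf_dom (h : ℕ → ℝ) (hmono : Monotone h) (hpos : ∀ n, 0 ≤ h n) :
    ∃ σ : ℝ → ℝ, ∃ c : ℝ, ClassKinf σ ∧ 0 < c ∧ (∀ a : ℝ, 0 ≤ a → 0 ≤ σ a) ∧
      ∀ m : ℝ, 0 ≤ m → h ⌈m⌉₊ ≤ σ m + c := by
  set v : ℕ → ℝ := fun n => n + h (n + 1) with hv
  set d : ℕ → ℝ := fun n => v (n + 1) - v n with hd
  have hd1 : ∀ n, 1 ≤ d n := by
    intro n
    have := hmono (Nat.le_succ (n + 1))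
    simp only [hd, hv]
    push_cast
    linarith
  have hd0 : ∀ n, 0 < d n := fun n => lt_of_lt_of_le one_pos (hd1 n)
  have hvsucc : ∀ n, v (n + 1) = v n + d n := by intro n; simp only [hd]; ring
  have hvmono : StrictMono v := by
    apply strictMono_nat_of_lt_succ
    intro n
    have := hd0 n
    rw [hvsucc n]; linarith
  have hvn : ∀ n : ℕ, (n : ℝ) ≤ v n := by
    intro n; simp only [hv]; linarith [hpos (n + 1)]
  set σ0 : ℝ → ℝ := fun a => v ⌊a⌋₊ + (a - ⌊a⌋₊) * d ⌊a⌋₊ with hσ0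
  have hfrac : ∀ a : ℝ, a - (⌊a⌋₊ : ℝ) < 1 := by
    intro a; have := Nat.lt_floor_add_one a; linarith
  -- strict monotonicity of σ0
  have hsm : StrictMono σ0 := by
    intro a b hab
    have hfl : ⌊a⌋₊ ≤ ⌊b⌋₊ := Nat.floor_mono hab.le
    rcases eq_or_lt_of_le hfl with heq | hlt
    · have := hd0 ⌊a⌋₊
      simp only [hσ0, ← heq]
      nlinarith
    · have hb0 : 0 ≤ b := by
        by_contra hb
        push_neg at hb
        have : ⌊b⌋₊ = 0 := Nat.floor_of_nonpos hb.le
        omega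
      have h1 : σ0 a < v (⌊a⌋₊ + 1) := by
        have h2 := hfrac a
        have h3 := hd0 ⌊a⌋₊
        rw [hvsucc]
        simp only [hσ0]
        nlinarith
      have h2 : v (⌊a⌋₊ + 1) ≤ v ⌊b⌋₊ := hvmono.monotone hlt
      have h3 : v ⌊b⌋₊ ≤ σ0 b := by
        have h4 := Nat.floor_le hb0
        have h5 := (hd0 ⌊b⌋₊).le
        simp only [hσ0]
        nlinarith
      linarith
  -- surjectivity of σ0
  have hsurj : Function.Surjective σ0 := by
    intro y
    by_cases hy : y < v 0
    · refine ⟨(y - v 0) / d 0, ?_⟩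
      have hd0' := hd0 0
      have ha : (y - v 0) / d 0 ≤ 0 := div_nonpos_iff.mpr (Or.inr ⟨by linarith, hd0'.le⟩)
      have hfl : ⌊(y - v 0) / d 0⌋₊ = 0 := Nat.floor_of_nonpos ha
      simp only [hσ0, hfl, Nat.cast_zero, sub_zero]
      rw [div_mul_cancel₀ _ (ne_of_gt hd0')]
      ring
    · push_neg at hy
      have hex : ∃ n, y < v (n + 1) := by
        refine ⟨⌈y⌉₊, ?_⟩
        have h1 := Nat.le_ceil y
        have h2 := hvn (⌈y⌉₊ + 1)
        push_cast at h2
        linarith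
      set n := Nat.find hex with hn
      have hyn : y < v (n + 1) := Nat.find_spec hex
      have hvny : v n ≤ y := by
        match hn2 : n, hy with
        | 0, hy => exact hy
        | (k+1), _ =>
          have := Nat.find_min hex (m := k) (by omega)
          push_neg at this
          exact this
      have hdn := hd0 n
      set q : ℝ := (y - v n) / d n with hq
      have h01 : 0 ≤ q := div_nonneg (by linarith) hdn.le
      have h02 : q < 1 := by
        rw [hq, div_lt_one hdn]
        have := hvsucc n
        linarith
      refine ⟨(n : ℝ) + q, ?_⟩
      have hfl : ⌊(n : ℝ) + q⌋₊ = n := by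
        rw [Nat.floor_eq_iff (by positivity)]
        constructor <;> [linarith; linarith]
      simp only [hσ0, hfl, add_sub_cancel_left]
      rw [hq, div_mul_cancel₀ _ (ne_of_gt hdn)]
      ring
  have hcont : Continuous σ0 := by
    have := (StrictMono.orderIsoOfSurjective σ0 hsm hsurj).continuous
    rwa [StrictMono.coe_orderIsoOfSurjective] at this
  have hσ00 : σ0 0 = h 1 := by
    simp only [hσ0, Nat.floor_zero, Nat.cast_zero, sub_zero, zero_mul, add_zero]
    simp [hv]
  refine ⟨fun a => σ0 a - σ0 0, σ0 0 + 1, ⟨⟨?_, ?_, ?_⟩, ?_⟩, ?_, ?_, ?_⟩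
  · exact ((hcont.sub continuous_const).continuousOn)
  · exact fun a _ b _ hab => by simpa using hsm hab
  · simp
  · -- unbounded
    intro cc
    refine ⟨(⌈cc + σ0 0⌉₊ : ℝ), Nat.cast_nonneg _, ?_⟩
    set n := ⌈cc + σ0 0⌉₊ with hnn
    have h1 : σ0 (n : ℝ) = v n := by
      simp [hσ0, Nat.floor_natCast]
    have h2 : (n : ℝ) ≤ v n := hvn n
    have h3 : cc + σ0 0 ≤ (n : ℝ) := Nat.le_ceil _
    show cc ≤ σ0 (n : ℝ) - σ0 0
    rw [h1]; linarith
  · rw [hσ00]; linarith [hpos 1]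
  · intro a ha
    have := hsm.monotone ha
    show 0 ≤ σ0 a - σ0 0
    linarith
  · intro m hm
    have h1 : v ⌊m⌋₊ ≤ σ0 m := by
      have h4 := Nat.floor_le hm
      have h5 := (hd0 ⌊m⌋₊).le
      simp only [hσ0]
      nlinarith
    have h2 : h ⌈m⌉₊ ≤ h (⌊m⌋₊ + 1) := hmono (Nat.ceil_le_floor_add_one m)
    have h3 : h (⌊m⌋₊ + 1) ≤ v ⌊m⌋₊ := by
      simp only [hv]
      linarith [show (0:ℝ) ≤ (⌊m⌋₊ : ℝ) from Nat.cast_nonneg _]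
    show h ⌈m⌉₊ ≤ σ0 m - σ0 0 + (σ0 0 + 1)
    linarith

private lemma exists_monotone_ge (f : ℕ → ℝ) :
    ∃ H : ℕ → ℝ, Monotone H ∧ (∀ n, 0 ≤ H n) ∧ ∀ n, f n ≤ H n := by
  refine ⟨fun n => (Finset.range (n + 1)).sup' Finset.nonempty_range_add_one
    (fun k => max (f k) 0), ?_, ?_, ?_⟩
  · intro a b hab
    exact Finset.sup'_mono _ (Finset.range_subset_range.mpr (by omega)) _
  · intro n
    show (0:ℝ) ≤ (Finset.range (n + 1)).sup' Finset.nonempty_range_add_one (fun k => max (f k) 0)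
    exact le_trans (le_max_right (f n) 0)
      (Finset.le_sup' (fun k => max (f k) 0) (Finset.self_mem_range_succ n))
  · intro n
    show f n ≤ (Finset.range (n + 1)).sup' Finset.nonempty_range_add_one (fun k => max (f k) 0)
    exact le_trans (le_max_left (f n) 0)
      (Finset.le_sup' (fun k => max (f k) 0) (Finset.self_mem_range_succ n))

/-- Key step: trajectories with bounded initial state and input norm are uniformly bounded. -/
private lemma step1 {X U : Type*} [NormedAddCommGroup X] [NormedSpace ℝ X] [Zero U]
    (S : ControlSystem X U) (h1 : S.BRS) (h2 : S.ULIM)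
    (r w : ℝ) (hr : 0 < r) (hw : 0 ≤ w) :
    ∃ M : ℝ, ∀ x : X, ‖x‖ ≤ r → ∀ u ∈ S.inputs, S.Unorm u ≤ w → ∀ t : ℝ, 0 ≤ t →
      ‖S.phi t x u‖ ≤ M := by
  obtain ⟨γ, hγ, hul⟩ := h2
  have hγw : 0 ≤ γ w := classK0_nonneg hγ hw
  set ρ : ℝ := max r (2 + γ w) with hρdef
  have hρr : r ≤ ρ := le_max_left _ _
  have hρ2 : 2 + γ w ≤ ρ := le_max_right _ _
  have hρpos : 0 < ρ := lt_of_lt_of_le hr hρr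
  obtain ⟨τ, hτ0, hτ⟩ := hul 1 one_pos ρ hρpos
  obtain ⟨M, hM⟩ := h1 (max ρ w) (lt_of_lt_of_le hρpos (le_max_left _ _)) (τ + 1) (by linarith)
  refine ⟨M, ?_⟩
  intro x hx u hu huw t ht
  have key : ∃ s, 0 ≤ s ∧ s ≤ t ∧ t - s ≤ τ ∧ ‖S.phi s x u‖ ≤ ρ := by
    set K := Icc (0:ℝ) t ∩ (fun s => ‖S.phi s x u‖) ⁻¹' (Iic ρ) with hK
    have hK0 : (0:ℝ) ∈ K := by
      constructor
      · exact ⟨le_refl 0, ht⟩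
      · simp only [mem_preimage, mem_Iic, S.identity]
        exact hx.trans hρr
    have hKc : IsClosed K := by
      have hcont : ContinuousOn (fun s => ‖S.phi s x u‖) (Icc 0 t) :=
        ((S.cont x u hu).mono Icc_subset_Ici_self).norm
      exact hcont.preimage_isClosed_of_isClosed isClosed_Icc isClosed_Iic
    have hKbdd : BddAbove K := ⟨t, fun s hs => hs.1.2⟩
    set s := sSup K with hsdef
    have hsK : s ∈ K := hKc.csSup_mem ⟨0, hK0⟩ hKbdd
    have hs0 : 0 ≤ s := hsK.1.1
    refine ⟨s, hs0, hsK.1.2, ?_, hsK.2⟩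
    by_contra hcon
    push_neg at hcon
    have hst : s < t := by linarith
    have hv : (fun z => u (z + s)) ∈ S.inputs := S.shift_mem u hu s hs0
    have hvn : S.Unorm (fun z => u (z + s)) ≤ w := (S.shift_norm u hu s hs0).trans huw
    obtain ⟨t₁, ht₁, hb⟩ := hτ (S.phi s x u) hsK.2 _ hv
    have hγv : γ (S.Unorm (fun z => u (z + s))) ≤ γ w :=
      classK0_mono hγ (S.Unorm_nonneg _) hvn
    have hco := S.cocycle s hs0 t₁ ht₁.1 x u hu
    have hlt : ‖S.phi (s + t₁) x u‖ ≤ 1 + γ w := by rw [← hco]; linarith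
    have hmem : s + t₁ ∈ K := by
      refine ⟨⟨by linarith [ht₁.1], by linarith [ht₁.2]⟩, ?_⟩
      simp only [mem_preimage, mem_Iic]
      linarith
    have ht₁0 : t₁ = 0 := by
      have := le_csSup hKbdd hmem
      have := ht₁.1
      linarith
    rw [ht₁0, add_zero] at hlt
    have hstrict : ‖S.phi s x u‖ < ρ := lt_of_le_of_lt hlt (by linarith)
    have hcwa : ContinuousWithinAt (fun z => ‖S.phi z x u‖) (Ici 0) s :=
      (S.cont x u hu).norm s hs0
    have hev1 : ∀ᶠ z in nhdsWithin s (Ioi s), ‖S.phi z x u‖ < ρ :=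
      ((hcwa.eventually_lt_const hstrict).filter_mono
        (nhdsWithin_mono s (fun z hz => le_trans hs0 (le_of_lt hz))))
    have hev2 : ∀ᶠ z in nhdsWithin s (Ioi s), z < t :=
      Filter.Eventually.filter_mono nhdsWithin_le_nhds
        (isOpen_Iio.eventually_mem (show s ∈ Iio t from hst))
    have hev3 : ∀ᶠ z in nhdsWithin s (Ioi s), s < z :=
      eventually_mem_nhdsWithin
    obtain ⟨z, ⟨hz1, hz2⟩, hz3⟩ := ((hev1.and hev2).and hev3).exists
    have hzK : z ∈ K := by
      refine ⟨⟨by linarith, hz2.le⟩, ?_⟩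
      simp only [mem_preimage, mem_Iic]
      exact hz1.le
    have := le_csSup hKbdd hzK
    linarith
  obtain ⟨s, hs0, hst, hsτ, hsρ⟩ := key
  have hv : (fun z => u (z + s)) ∈ S.inputs := S.shift_mem u hu s hs0
  have hvn : S.Unorm (fun z => u (z + s)) ≤ w := (S.shift_norm u hu s hs0).trans huw
  have hco := S.cocycle s hs0 (t - s) (by linarith) x u hu
  have heq : s + (t - s) = t := by ring
  rw [heq] at hco
  rw [← hco]
  exact hM _ (hsρ.trans (le_max_left _ _)) _ hv (hvn.trans (le_max_right _ _)) _
    ⟨by linarith, by linarith⟩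

/-- If a forward complete control system is BRS and has the uniform limit property,
then it is uniformly globally bounded. -/
theorem BRS.ULIM.toUGB (S : ControlSystem X U) (h1 : S.BRS) (h2 : S.ULIM) : S.UGB := by
  have key : ∀ n : ℕ, ∃ M : ℝ, ∀ x : X, ‖x‖ ≤ (n : ℝ) + 1 → ∀ u ∈ S.inputs,
      S.Unorm u ≤ (n : ℝ) + 1 → ∀ t : ℝ, 0 ≤ t → ‖S.phi t x u‖ ≤ M :=
    fun n => step1 S h1 h2 ((n : ℝ) + 1) ((n : ℝ) + 1) (by positivity) (by positivity)
  choose Mf hMf using key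
  obtain ⟨H, hHmono, hH0, hHge⟩ := exists_monotone_ge Mf
  obtain ⟨σ, c, hσK, hc, hσnn, hdom⟩ := exists_kinf_dom H hHmono hH0
  refine ⟨σ, σ, c, hσK, Or.inl hσK, hc, ?_⟩
  intro t ht x u hu
  set m := max ‖x‖ (S.Unorm u) with hm
  have hm0 : 0 ≤ m := le_trans (norm_nonneg x) (le_max_left _ _)
  have hmc : m ≤ (⌈m⌉₊ : ℝ) + 1 := le_trans (Nat.le_ceil m) (by linarith)
  have hxn : ‖x‖ ≤ (⌈m⌉₊ : ℝ) + 1 := le_trans (le_max_left _ _) hmc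
  have hun : S.Unorm u ≤ (⌈m⌉₊ : ℝ) + 1 := le_trans (le_max_right _ _) hmc
  have h₁ : ‖S.phi t x u‖ ≤ Mf ⌈m⌉₊ := hMf ⌈m⌉₊ x hxn u hu hun t ht
  have h₂ : Mf ⌈m⌉₊ ≤ H ⌈m⌉₊ := hHge ⌈m⌉₊
  have h₃ : H ⌈m⌉₊ ≤ σ m + c := hdom m hm0
  have h₄ : σ m ≤ σ ‖x‖ + σ (S.Unorm u) := by
    rcases max_cases ‖x‖ (S.Unorm u) with ⟨he, _⟩ | ⟨he, _⟩
    · rw [hm, he]; linarith [hσnn (S.Unorm u) (S.Unorm_nonneg u)]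
    · rw [hm, he]; linarith [hσnn ‖x‖ (norm_nonneg x)]
  linarith

end ControlSystem
end

section
/- If a forward complete control system Σ=(X,𝒰,φ) has the uniform limit property (ULIM) and is uniformly globally stable (UGS), then Σ has the uniform asymptotic gain (UAG) property. -/
open Set Filter

namespace ControlSystem

variable {X U : Type*} [NormedAddCommGroup X] [NormedSpace ℝ X] [Zero U]

lemma weak_of_K0 {γ : ℝ → ℝ} (h : ClassK0 γ) :
    γ 0 = 0 ∧ MonotoneOn γ (Ici 0) ∧ ContinuousOn γ (Ici 0) := by
  rcases h with ⟨hc, hm, h0⟩ | hz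
  · exact ⟨h0, hm.monotoneOn, hc⟩
  · refine ⟨hz 0 le_rfl, ?_, ?_⟩
    · intro a ha b hb _
      rw [hz a ha, hz b hb]
    · exact continuousOn_const.congr (fun x hx => hz x hx)

lemma weak_nonneg {γ : ℝ → ℝ} (h0 : γ 0 = 0) (hm : MonotoneOn γ (Ici 0))
    {r : ℝ} (hr : 0 ≤ r) : 0 ≤ γ r := by
  have := hm (self_mem_Ici) hr hr
  rwa [h0] at this

/-- If a forward complete control system is ULIM and UGS, then it is UAG. -/
theorem ULIM.UGS.toUAG (S : ControlSystem X U) (h1 : S.ULIM) (h2 : S.UGS) : S.UAG := by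
  obtain ⟨γU, hγU, hULIM⟩ := h1
  obtain ⟨σ, γG, hσ, hγG, hUGS⟩ := h2
  obtain ⟨hγU0, hγUmono, hγUcont⟩ := weak_of_K0 hγU
  obtain ⟨hγG0, hγGmono, hγGcont⟩ := weak_of_K0 (hγG.imp (fun h => h.1) id)
  obtain ⟨⟨hσcont, hσmono, hσ0⟩, hσunbdd⟩ := hσ
  have hσmonoOn : MonotoneOn σ (Ici 0) := hσmono.monotoneOn
  have hσnonneg : ∀ r : ℝ, 0 ≤ r → 0 ≤ σ r := fun r hr => weak_nonneg hσ0 hσmonoOn hr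
  -- the candidate gain
  set g : ℝ → ℝ := fun r => γU r + r with hg_def
  have hgmem : ∀ r : ℝ, 0 ≤ r → 0 ≤ g r := fun r hr =>
    add_nonneg (weak_nonneg hγU0 hγUmono hr) hr
  set γc : ℝ → ℝ := fun r => σ (2 * g r) + γG r with hγc_def
  have hγcK : ClassKinf0 γc := by
    left
    constructor
    · refine ⟨?_, ?_, ?_⟩
      · refine ContinuousOn.add ?_ hγGcont
        refine hσcont.comp ?_ ?_
        · exact (continuousOn_const.mul (hγUcont.add continuousOn_id))
        · intro r hr
          have := hgmem r hr
          simp only [mem_Ici]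
          linarith
      · intro a ha b hb hab
        have h1 : σ (2 * g a) < σ (2 * g b) := by
          apply hσmono (mem_Ici.mpr (mul_nonneg (by norm_num) (hgmem a ha)))
            (mem_Ici.mpr (mul_nonneg (by norm_num) (hgmem b hb)))
          have := hγUmono ha hb hab.le
          simp only [hg_def]
          nlinarith
        have h2 : γG a ≤ γG b := hγGmono ha hb hab.le
        exact add_lt_add_of_lt_of_le h1 h2
      · simp only [hγc_def, hg_def, hγU0, hγG0]
        norm_num [hσ0]
    · intro c
      obtain ⟨r, hr, hcr⟩ := hσunbdd c
      refine ⟨r, hr, ?_⟩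
      have hσr : σ r ≤ σ (2 * g r) := by
        apply hσmonoOn (mem_Ici.mpr hr)
          (mem_Ici.mpr (by linarith [mul_nonneg (by norm_num : (0:ℝ) ≤ 2) (hgmem r hr)]))
        have hγUr := weak_nonneg hγU0 hγUmono hr
        simp only [hg_def]
        nlinarith
      have hγGr := weak_nonneg hγG0 hγGmono hr
      calc c ≤ σ r := hcr
        _ ≤ σ (2 * g r) := hσr
        _ ≤ γc r := by simp only [hγc_def]; linarith
  refine ⟨γc, hγcK, ?_⟩
  intro ε hε r hr
  -- find ε' with σ (2 ε') ≤ ε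
  have hcw : Tendsto σ (nhdsWithin 0 (Ici 0)) (nhds 0) := by
    have := hσcont 0 (self_mem_Ici)
    rwa [ContinuousWithinAt, hσ0] at this
  rw [Metric.tendsto_nhdsWithin_nhds] at hcw
  obtain ⟨δ, hδ, hδε⟩ := hcw ε hε
  set ε' : ℝ := δ / 4 with hε'_def
  have hε'pos : 0 < ε' := by positivity
  have hσ2ε' : σ (2 * ε') ≤ ε := by
    have h2ε' : (2 : ℝ) * ε' ∈ Ici (0:ℝ) := by simp only [mem_Ici]; positivity
    have hd : dist (2 * ε') (0:ℝ) < δ := by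
      rw [Real.dist_eq, sub_zero, abs_of_nonneg (by positivity)]
      simp only [hε'_def]; linarith
    have := hδε h2ε' hd
    rw [Real.dist_eq, sub_zero] at this
    exact (le_abs_self _).trans this.le
  obtain ⟨τ, hτ, hτprop⟩ := hULIM ε' hε'pos r hr
  refine ⟨τ, hτ, ?_⟩
  intro u hu x hx t ht
  obtain ⟨t₀, ht₀, hb⟩ := hτprop x hx.le u hu
  set n : ℝ := S.Unorm u with hn_def
  have hn : 0 ≤ n := S.Unorm_nonneg u
  have hγUn : 0 ≤ γU n := weak_nonneg hγU0 hγUmono hn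
  have hteq : S.phi t x u = S.phi (t - t₀) (S.phi t₀ x u) (fun s => u (s + t₀)) := by
    rw [S.cocycle t₀ ht₀.1 (t - t₀) (by linarith [ht₀.2]) x u hu]
    congr 1
    ring
  have hshift_mem := S.shift_mem u hu t₀ ht₀.1
  have hshift_norm := S.shift_norm u hu t₀ ht₀.1
  have hUGSbound := hUGS (t - t₀) (by linarith [ht₀.2]) (S.phi t₀ x u) _ hshift_mem
  rw [← hteq] at hUGSbound
  have hy : (0:ℝ) ≤ ‖S.phi t₀ x u‖ := norm_nonneg _
  have hσy : σ ‖S.phi t₀ x u‖ ≤ σ (ε' + γU n) :=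
    hσmonoOn (mem_Ici.mpr hy) (mem_Ici.mpr (by linarith)) hb
  -- σ(a+b) ≤ σ(2a) + σ(2b)
  have hsplit : σ (ε' + γU n) ≤ σ (2 * ε') + σ (2 * γU n) := by
    rcases le_total ε' (γU n) with hc | hc
    · have : σ (ε' + γU n) ≤ σ (2 * γU n) :=
        hσmonoOn (mem_Ici.mpr (by linarith)) (mem_Ici.mpr (by linarith)) (by linarith)
      linarith [hσnonneg (2 * ε') (by positivity)]
    · have : σ (ε' + γU n) ≤ σ (2 * ε') :=
        hσmonoOn (mem_Ici.mpr (by linarith)) (mem_Ici.mpr (by positivity)) (by linarith)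
      linarith [hσnonneg (2 * γU n) (by linarith)]
  have hlast : σ (2 * γU n) ≤ σ (2 * g n) := by
    apply hσmonoOn (mem_Ici.mpr (by linarith)) (mem_Ici.mpr (by linarith [hgmem n hn]))
    simp only [hg_def]
    linarith
  have hγGshift : γG (S.Unorm fun s => u (s + t₀)) ≤ γG n :=
    hγGmono (mem_Ici.mpr (S.Unorm_nonneg _)) (mem_Ici.mpr hn) hshift_norm
  calc ‖S.phi t x u‖ ≤ σ ‖S.phi t₀ x u‖ + γG (S.Unorm fun s => u (s + t₀)) := hUGSbound
    _ ≤ σ (ε' + γU n) + γG n := add_le_add hσy hγGshift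
    _ ≤ σ (2 * ε') + σ (2 * γU n) + γG n := by linarith
    _ ≤ ε + (σ (2 * g n) + γG n) := by linarith
    _ = ε + γc n := by simp only [hγc_def]

end ControlSystem
end

section
/- If a forward complete control system Σ=(X,𝒰,φ) has the uniform asymptotic gain (UAG) property and is uniformly globally stable (UGS), then Σ is ISS. -/
open Set Filter

section KLdom
open MeasureTheory intervalIntegral
/-- window shift estimate -/
lemma winShift (f : ℝ → ℝ) (hint : ∀ a b : ℝ, IntervalIntegrable f volume a b)
    (M c u v : ℝ) (hM : ∀ x ≤ c, |f x| ≤ M) (hu : u + 1 ≤ c) (hv : v + 1 ≤ c) :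
    |(∫ x in u..(u+1), f x) - ∫ x in v..(v+1), f x| ≤ 2 * M * |u - v| := by
  have h1 : (∫ x in u..(u+1), f x)
      = (∫ x in u..v, f x) + ∫ x in v..(u+1), f x :=
    (integral_add_adjacent_intervals (hint u v) (hint v (u+1))).symm
  have h2 : (∫ x in v..(u+1), f x)
      = (∫ x in v..(v+1), f x) + ∫ x in (v+1)..(u+1), f x :=
    (integral_add_adjacent_intervals (hint v (v+1)) (hint (v+1) (u+1))).symm
  have key : (∫ x in u..(u+1), f x) - (∫ x in v..(v+1), f x)
      = (∫ x in u..v, f x) + ∫ x in (v+1)..(u+1), f x := by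
    rw [h1, h2]; ring
  have b1 : |∫ x in u..v, f x| ≤ M * |v - u| := by
    have := norm_integral_le_of_norm_le_const (C := M) (f := f) (a := u) (b := v) ?_
    · simpa [Real.norm_eq_abs] using this
    · intro x hx
      rw [Real.norm_eq_abs]
      refine hM x ?_
      rcases le_total u v with h | h
      · have := hx.2; simp [uIoc_of_le h] at hx
        nlinarith [hx.2]
      · simp [uIoc_of_ge h] at hx
        nlinarith [hx.2]
  have b2 : |∫ x in (v+1)..(u+1), f x| ≤ M * |u + 1 - (v + 1)| := by
    have := norm_integral_le_of_norm_le_const (C := M) (f := f) (a := v+1) (b := u+1) ?_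
    · simpa [Real.norm_eq_abs] using this
    · intro x hx
      rw [Real.norm_eq_abs]
      refine hM x ?_
      rcases le_total (v+1) (u+1) with h | h
      · simp [uIoc_of_le h] at hx
        nlinarith [hx.2]
      · simp [uIoc_of_ge h] at hx
        nlinarith [hx.2]
  calc |(∫ x in u..(u+1), f x) - ∫ x in v..(v+1), f x|
      ≤ |∫ x in u..v, f x| + |∫ x in (v+1)..(u+1), f x| := by
        rw [key]; exact abs_add_le _ _
    _ ≤ M * |v - u| + M * |u + 1 - (v + 1)| := add_le_add b1 b2
    _ = 2 * M * |u - v| := by rw [abs_sub_comm v u, show u + 1 - (v+1) = u - v by ring]; ring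

lemma exists_KL_dominating (ψ : ℝ → ℝ → ℝ) (sg : ℝ → ℝ)
    (hσc : Continuous sg) (hσm : Monotone sg) (hσ0 : sg 0 = 0)
    (hmono : ∀ t, Monotone (fun r => ψ r t))
    (hanti : ∀ r, Antitone (ψ r))
    (hnn : ∀ r t, 0 ≤ ψ r t)
    (hub : ∀ r t, ψ r t ≤ sg r)
    (hdecay : ∀ r : ℝ, ∀ ε > (0:ℝ), ∃ T : ℝ, ∀ t ≥ T, ψ r t ≤ ε) :
    ∃ β, ClassKL β ∧ ∀ r t : ℝ, 0 ≤ r → 0 ≤ t → ψ r t ≤ β r t := by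
  have hσnn : ∀ r, 0 ≤ sg r := fun r => le_trans (hnn r 0) (hub r 0)
  -- η
  set η : ℝ → ℝ → ℝ := fun a t => ∫ s in (t-1)..t, ψ a s with hη
  have ψint : ∀ a, ∀ u v : ℝ, IntervalIntegrable (ψ a) volume u v :=
    fun a u v => (hanti a).intervalIntegrable
  have ηint : ∀ t, ∀ u v : ℝ, IntervalIntegrable (fun a => η a t) volume u v := by
    intro t u v
    refine Monotone.intervalIntegrable ?_
    intro a b hab
    exact integral_mono_on (by linarith) (ψint a _ _) (ψint b _ _)
      (fun x _ => hmono x hab)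
  have ηmono : ∀ t, Monotone (fun a => η a t) := by
    intro t a b hab
    exact integral_mono_on (by linarith) (ψint a _ _) (ψint b _ _)
      (fun x _ => hmono x hab)
  have ηnn : ∀ a t, 0 ≤ η a t :=
    fun a t => integral_nonneg (by linarith) (fun x _ => hnn a x)
  have ηub : ∀ a t, η a t ≤ sg a := by
    intro a t
    calc η a t ≤ ∫ _ in (t-1)..t, sg a :=
          integral_mono_on (by linarith) (ψint a _ _)
            intervalIntegrable_const (fun x _ => hub a x)
      _ = sg a := by simp
  have ηge : ∀ a t, ψ a t ≤ η a t := by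
    intro a t
    calc ψ a t = ∫ _ in (t-1)..t, ψ a t := by simp
      _ ≤ η a t := integral_mono_on (by linarith) intervalIntegrable_const
            (ψint a _ _) (fun x hx => hanti a hx.2)
  have ηle : ∀ a t, η a t ≤ ψ a (t-1) := by
    intro a t
    calc η a t ≤ ∫ _ in (t-1)..t, ψ a (t-1) :=
          integral_mono_on (by linarith) (ψint a _ _) intervalIntegrable_const
            (fun x hx => hanti a hx.1)
      _ = ψ a (t-1) := by simp
  have ηanti : ∀ a, Antitone (η a) := by
    intro a t t' h
    have hd : (0:ℝ) ≤ t' - t := by linarith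
    have e1 : η a t' = ∫ s in (t-1)..t, ψ a (s + (t'-t)) := by
      rw [integral_comp_add_right (f := ψ a) (t'-t)]
      have : t - 1 + (t' - t) = t' - 1 := by ring
      rw [this, show t + (t' - t) = t' by ring]
    rw [e1]
    refine integral_mono_on (by linarith) ?_ (ψint a _ _) ?_
    · exact (Antitone.comp_monotone (hanti a) (fun _ _ hxy => add_le_add_left hxy _)).intervalIntegrable
    · intro x _; exact hanti a (by linarith)
  -- ζ
  set ζ : ℝ → ℝ → ℝ := fun r t => ∫ x in r..(r+1), η x t with hζ
  have ζnn : ∀ r t, 0 ≤ ζ r t :=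
    fun r t => integral_nonneg (by linarith) (fun x _ => ηnn x t)
  have ζge : ∀ r t, ψ r t ≤ ζ r t := by
    intro r t
    calc ψ r t ≤ η r t := ηge r t
      _ = ∫ _ in r..(r+1), η r t := by simp
      _ ≤ ζ r t := integral_mono_on (by linarith) intervalIntegrable_const
            (ηint t _ _) (fun x hx => ηmono t hx.1)
  have ζle : ∀ r t, ζ r t ≤ η (r+1) t := by
    intro r t
    calc ζ r t ≤ ∫ _ in r..(r+1), η (r+1) t :=
          integral_mono_on (by linarith) (ηint t _ _) intervalIntegrable_const
            (fun x hx => ηmono t hx.2)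
      _ = η (r+1) t := by simp
  have ζmono : ∀ t, Monotone (fun r => ζ r t) := by
    intro t r r' h
    have e1 : ζ r' t = ∫ x in r..(r+1), η (x + (r'-r)) t := by
      rw [integral_comp_add_right (f := fun x => η x t) (r'-r)]
      rw [show r + (r' - r) = r' by ring, show r + 1 + (r' - r) = r' + 1 by ring]
    dsimp only
    rw [e1]
    refine integral_mono_on (by linarith) (ηint t _ _) ?_ ?_
    · exact ((ηmono t).comp (fun _ _ hxy => add_le_add_left hxy _)).intervalIntegrable
    · intro x _; exact ηmono t (by linarith)
  have ζanti : ∀ r, Antitone (ζ r) := by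
    intro r t t' h
    exact integral_mono_on (by linarith) (ηint t' _ _) (ηint t _ _)
      (fun x _ => ηanti x h)
  -- joint continuity of ζ
  have ζcont : Continuous (fun p : ℝ × ℝ => ζ p.1 p.2) := by
    rw [continuous_iff_continuousAt]
    rintro ⟨r₀, t₀⟩
    rw [Metric.continuousAt_iff]
    intro ε hε
    set M := sg (r₀ + 2) with hM
    have hMnn : 0 ≤ M := hσnn _
    have hδ : (0:ℝ) < min 1 (ε / (4*M+1)) := by
      apply lt_min one_pos
      positivity
    refine ⟨min 1 (ε / (4*M+1)), hδ, ?_⟩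
    rintro ⟨r, t⟩ hdist
    have hr : |r - r₀| < min 1 (ε / (4*M+1)) := by
      calc |r - r₀| = dist r r₀ := (Real.dist_eq _ _).symm
        _ ≤ dist ((r,t) : ℝ × ℝ) (r₀,t₀) := by rw [Prod.dist_eq]; exact le_max_left _ _
        _ < _ := hdist
    have ht : |t - t₀| < min 1 (ε / (4*M+1)) := by
      calc |t - t₀| = dist t t₀ := (Real.dist_eq _ _).symm
        _ ≤ dist ((r,t) : ℝ × ℝ) (r₀,t₀) := by rw [Prod.dist_eq]; exact le_max_right _ _
        _ < _ := hdist
    have hr1 : |r - r₀| < 1 := lt_of_lt_of_le hr (min_le_left _ _)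
    -- step A
    have hA : |ζ r t - ζ r₀ t| ≤ 2 * M * |r - r₀| := by
      refine winShift (fun x => η x t) (ηint t) M (r₀ + 2) r r₀ ?_ ?_ (by linarith)
      · intro x hx
        rw [abs_of_nonneg (ηnn x t)]
        exact le_trans (ηub x t) (hσm hx)
      · have := abs_lt.mp hr1; linarith [this.2]
    -- step B
    have hB : ∀ x ∈ Set.uIcc r₀ (r₀+1), |η x t - η x t₀| ≤ 2 * M * |t - t₀| := by
      intro x hx
      have hxle : x ≤ r₀ + 2 := by
        rcases hx with ⟨_, h2⟩
        have : x ≤ max r₀ (r₀+1) := h2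
        simp [max_eq_right (by linarith : r₀ ≤ r₀ + 1)] at this
        linarith
      have e1 : η x t = ∫ s in (t-1)..((t-1)+1), ψ x s := by
        rw [show (t-1)+1 = t by ring]
      have e2 : η x t₀ = ∫ s in (t₀-1)..((t₀-1)+1), ψ x s := by
        rw [show (t₀-1)+1 = t₀ by ring]
      have := winShift (ψ x) (ψint x) M (max t t₀ + 1) (t-1) (t₀-1)
        (fun s _ => by rw [abs_of_nonneg (hnn x s)]; exact le_trans (hub x s) (hσm hxle))
        (by rcases le_max_left t t₀ with h; linarith [le_max_left t t₀])
        (by linarith [le_max_right t t₀])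
      rw [e1, e2]
      convert this using 3
      ring
    -- step C
    have hC : |ζ r₀ t - ζ r₀ t₀| ≤ 2 * M * |t - t₀| := by
      have hsub : ζ r₀ t - ζ r₀ t₀ = ∫ x in r₀..(r₀+1), (η x t - η x t₀) :=
        (integral_sub (ηint t _ _) (ηint t₀ _ _)).symm
      rw [hsub]
      have := norm_integral_le_of_norm_le_const (C := 2 * M * |t - t₀|)
        (f := fun x => η x t - η x t₀) (a := r₀) (b := r₀+1) ?_
      · rw [Real.norm_eq_abs] at this
        calc |∫ x in r₀..(r₀+1), (η x t - η x t₀)| ≤ 2 * M * |t - t₀| * |r₀ + 1 - r₀| := this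
          _ = 2 * M * |t - t₀| := by norm_num
      · intro x hx
        rw [Real.norm_eq_abs]
        exact hB x (uIoc_subset_uIcc hx)
    have total : |ζ r t - ζ r₀ t₀| ≤ 2 * M * |r - r₀| + 2 * M * |t - t₀| := by
      calc |ζ r t - ζ r₀ t₀| = |(ζ r t - ζ r₀ t) + (ζ r₀ t - ζ r₀ t₀)| := by ring_nf
        _ ≤ |ζ r t - ζ r₀ t| + |ζ r₀ t - ζ r₀ t₀| := abs_add_le _ _
        _ ≤ _ := add_le_add hA hC
    have hδe : min 1 (ε / (4*M+1)) ≤ ε / (4*M+1) := min_le_right _ _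
    have h4 : (4*M+1) * (ε / (4*M+1)) = ε := by field_simp
    rw [Real.dist_eq]
    calc |ζ r t - ζ r₀ t₀| ≤ 2 * M * |r - r₀| + 2 * M * |t - t₀| := total
      _ < ε := by nlinarith [abs_nonneg (r - r₀), abs_nonneg (t - t₀), hr, ht, hδ,
          mul_le_mul_of_nonneg_left hδe (by linarith : (0:ℝ) ≤ 4*M+1)]
  -- β
  set β : ℝ → ℝ → ℝ :=
    fun r t => min (ζ r t) (sg r) + max r 0 * Real.exp (-(max t 0)) with hβ
  have βcont : Continuous (fun p : ℝ × ℝ => β p.1 p.2) := by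
    apply Continuous.add
    · exact ζcont.min (hσc.comp continuous_fst)
    · exact (continuous_fst.max continuous_const).mul
        (Real.continuous_exp.comp (continuous_neg.comp (continuous_snd.max continuous_const)))
  refine ⟨β, ⟨βcont.continuousOn, ?_, ?_⟩, ?_⟩
  · -- ClassK in r for each t ≥ 0
    intro t _
    refine ⟨?_, ?_, ?_⟩
    · exact (βcont.comp (continuous_id.prodMk continuous_const)).continuousOn
    · intro a ha b hb hab
      have h1 : min (ζ a t) (sg a) ≤ min (ζ b t) (sg b) :=
        min_le_min (ζmono t hab.le) (hσm hab.le)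
      have h2 : max a 0 * Real.exp (-(max t 0)) < max b 0 * Real.exp (-(max t 0)) := by
        rw [max_eq_left (ha : (0:ℝ) ≤ a), max_eq_left (le_trans ha hab.le)]
        exact mul_lt_mul_of_pos_right hab (Real.exp_pos _)
      exact add_lt_add_of_le_of_lt h1 h2
    · show min (ζ 0 t) (sg 0) + max 0 0 * Real.exp (-(max t 0)) = 0
      rw [hσ0, min_eq_right (ζnn 0 t)]
      simp
  · -- decay in t for r > 0
    intro r hr
    constructor
    · intro a ha b hb hab
      have h1 : min (ζ r b) (sg r) ≤ min (ζ r a) (sg r) :=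
        min_le_min (ζanti r hab.le) le_rfl
      have h2 : max r 0 * Real.exp (-(max b 0)) < max r 0 * Real.exp (-(max a 0)) := by
        rw [max_eq_left hr.le, max_eq_left (hb : (0:ℝ) ≤ b), max_eq_left (ha : (0:ℝ) ≤ a)]
        exact mul_lt_mul_of_pos_left (Real.exp_lt_exp.mpr (by linarith)) hr
      exact add_lt_add_of_le_of_lt h1 h2
    · have hgf : Tendsto (fun t => max r 0 * Real.exp (-(max t 0))) atTop (nhds 0) := by
        have h1 : Tendsto (fun t : ℝ => max r 0 * Real.exp (-t)) atTop (nhds 0) := by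
          have := Real.tendsto_exp_neg_atTop_nhds_zero.const_mul (max r 0)
          simpa using this
        refine h1.congr' ?_
        filter_upwards [eventually_ge_atTop (0:ℝ)] with t ht
        rw [max_eq_left ht]
      have hff : Tendsto (fun t => min (ζ r t) (sg r)) atTop (nhds 0) := by
        refine squeeze_zero (fun t => le_min (ζnn r t) (hσnn r)) 
          (fun t => le_trans (min_le_left _ _) (le_trans (ζle r t) (ηle (r+1) t))) ?_
        rw [Metric.tendsto_atTop]
        intro ε hε
        obtain ⟨T, hT⟩ := hdecay (r+1) (ε/2) (by linarith)
        refine ⟨T + 1, fun t ht => ?_⟩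
        rw [Real.dist_eq, sub_zero, abs_of_nonneg (hnn _ _)]
        have := hT (t-1) (by linarith)
        linarith
      have := hff.add hgf
      simpa using this
  · intro r t _ _
    have h1 : ψ r t ≤ min (ζ r t) (sg r) := le_min (ζge r t) (hub r t)
    have h2 : 0 ≤ max r 0 * Real.exp (-(max t 0)) :=
      mul_nonneg (le_max_right r 0) (Real.exp_pos _).le
    show ψ r t ≤ min (ζ r t) (sg r) + max r 0 * Real.exp (-(max t 0))
    linarith

end KLdom

namespace ControlSystem

variable {X U : Type*} [NormedAddCommGroup X] [NormedSpace ℝ X] [Zero U]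

/-- If a forward complete control system is UAG and UGS, then it is ISS. -/
theorem UAG.UGS.toISS (S : ControlSystem X U) (h1 : S.UAG) (h2 : S.UGS) : S.ISS := by
  obtain ⟨g1, hg1, hUAG⟩ := h1
  obtain ⟨σ, g2, hσ, hg2, hUGS⟩ := h2
  -- basic facts about ClassKinf0 functions
  have fact : ∀ g : ℝ → ℝ, ClassKinf0 g →
      ContinuousOn g (Ici 0) ∧ MonotoneOn g (Ici 0) ∧ g 0 = 0 := by
    rintro g (⟨⟨hc, hm, h0⟩, -⟩ | hz)
    · exact ⟨hc, hm.monotoneOn, h0⟩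
    · refine ⟨(continuousOn_const (c := (0:ℝ))).congr (fun x hx => hz x hx), ?_, hz 0 le_rfl⟩
      intro a ha b hb _
      rw [hz a ha, hz b hb]
  obtain ⟨g1c, g1m, g10⟩ := fact g1 hg1
  obtain ⟨g2c, g2m, g20⟩ := fact g2 hg2
  have g1nn : ∀ s : ℝ, 0 ≤ s → 0 ≤ g1 s := fun s hs => g10 ▸ g1m self_mem_Ici hs hs
  have g2nn : ∀ s : ℝ, 0 ≤ s → 0 ≤ g2 s := fun s hs => g20 ▸ g2m self_mem_Ici hs hs
  obtain ⟨⟨σc, σm, σ0⟩, -⟩ := hσ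
  -- the combined gain γ
  set γ : ℝ → ℝ := fun s => g1 s + g2 s + s with hγdef
  have hγK : ClassK γ := by
    refine ⟨(g1c.add g2c).add continuousOn_id, ?_, by simp [hγdef, g10, g20]⟩
    intro a ha b hb hab
    have := add_le_add (g1m ha hb hab.le) (g2m ha hb hab.le)
    simp only [hγdef]
    linarith
  have hg1γ : ∀ s : ℝ, 0 ≤ s → g1 s ≤ γ s := by
    intro s hs; have := g2nn s hs; simp only [hγdef]; linarith
  have hg2γ : ∀ s : ℝ, 0 ≤ s → g2 s ≤ γ s := by
    intro s hs; have := g1nn s hs; simp only [hγdef]; linarith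
  -- the envelope sg
  set sg : ℝ → ℝ := fun r => σ (max r 0) with hsgdef
  have hσc : Continuous sg := by
    have := σc.comp_continuous (f := fun r : ℝ => max r 0)
      (continuous_id.max continuous_const) (fun x => le_max_right x 0)
    exact this
  have hσm : Monotone sg := by
    intro a b hab
    exact σm.monotoneOn (le_max_right a 0) (le_max_right b 0) (max_le_max hab le_rfl)
  have hσ0 : sg 0 = 0 := by simp [hsgdef, σ0]
  have hσnn : ∀ r, 0 ≤ sg r := by
    intro r
    have : σ 0 ≤ σ (max r 0) :=
      σm.monotoneOn self_mem_Ici (le_max_right r 0) (le_max_right r 0)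
    rw [σ0] at this
    exact this
  -- the attainable-values sets and ψ
  set A : ℝ → ℝ → Set ℝ := fun r t =>
    insert (0:ℝ) {v | ∃ x u s, u ∈ S.inputs ∧ ‖x‖ ≤ max r 0 ∧ max t 0 ≤ s ∧
      v = ‖S.phi s x u‖ - γ (S.Unorm u)} with hAdef
  have hA_ne : ∀ r t, (A r t).Nonempty := fun r t => ⟨0, mem_insert _ _⟩
  have hA_ub : ∀ r t, ∀ v ∈ A r t, v ≤ sg r := by
    intro r t v hv
    rcases hv with rfl | ⟨x, u, s, hu, hx, hs, rfl⟩
    · exact hσnn r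
    · have hs0 : (0:ℝ) ≤ s := le_trans (le_max_right t 0) hs
      have h1 : ‖S.phi s x u‖ ≤ σ ‖x‖ + g2 (S.Unorm u) := hUGS s hs0 x u hu
      have h2 : σ ‖x‖ ≤ σ (max r 0) :=
        σm.monotoneOn (norm_nonneg x) (le_trans (norm_nonneg x) hx) hx
      have h3 : g2 (S.Unorm u) ≤ γ (S.Unorm u) := hg2γ _ (S.Unorm_nonneg u)
      simp only [hsgdef]
      linarith
  have hA_bdd : ∀ r t, BddAbove (A r t) := fun r t => ⟨sg r, hA_ub r t⟩
  set ψ : ℝ → ℝ → ℝ := fun r t => sSup (A r t) with hψdef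
  have hψnn : ∀ r t, 0 ≤ ψ r t := fun r t => le_csSup (hA_bdd r t) (mem_insert _ _)
  have hψub : ∀ r t, ψ r t ≤ sg r := fun r t => csSup_le (hA_ne r t) (hA_ub r t)
  have hψmono : ∀ t, Monotone (fun r => ψ r t) := by
    intro t r r' h
    refine csSup_le_csSup (hA_bdd r' t) (hA_ne r t) ?_
    rintro v (rfl | ⟨x, u, s, hu, hx, hs, rfl⟩)
    · exact mem_insert _ _
    · exact Or.inr ⟨x, u, s, hu, le_trans hx (max_le_max h le_rfl), hs, rfl⟩
  have hψanti : ∀ r, Antitone (ψ r) := by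
    intro r t t' h
    refine csSup_le_csSup (hA_bdd r t) (hA_ne r t') ?_
    rintro v (rfl | ⟨x, u, s, hu, hx, hs, rfl⟩)
    · exact mem_insert _ _
    · exact Or.inr ⟨x, u, s, hu, hx, le_trans (max_le_max h le_rfl) hs, rfl⟩
  have hψdecay : ∀ r : ℝ, ∀ ε > (0:ℝ), ∃ T : ℝ, ∀ t ≥ T, ψ r t ≤ ε := by
    intro r ε hε
    obtain ⟨τ, hτ0, hτ⟩ := hUAG ε hε (max r 0 + 1)
      (by positivity)
    refine ⟨τ, fun t ht => ?_⟩
    refine csSup_le (hA_ne r t) ?_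
    rintro v (rfl | ⟨x, u, s, hu, hx, hs, rfl⟩)
    · exact hε.le
    · have hxr : ‖x‖ < max r 0 + 1 := lt_of_le_of_lt hx (by linarith)
      have hsτ : τ ≤ s := le_trans ht (le_trans (le_max_left t 0) hs)
      have := hτ u hu x hxr s hsτ
      have h3 : g1 (S.Unorm u) ≤ γ (S.Unorm u) := hg1γ _ (S.Unorm_nonneg u)
      linarith
  obtain ⟨β, hβKL, hβdom⟩ := exists_KL_dominating ψ sg hσc hσm hσ0
    hψmono hψanti hψnn hψub hψdecay
  refine ⟨β, γ, hβKL, hγK, ?_⟩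
  intro x u hu t ht
  have hmem : (‖S.phi t x u‖ - γ (S.Unorm u)) ∈ A ‖x‖ t :=
    Or.inr ⟨x, u, t, hu, le_max_left _ _, max_le le_rfl ht, rfl⟩
  have h1 : ‖S.phi t x u‖ - γ (S.Unorm u) ≤ ψ ‖x‖ t := le_csSup (hA_bdd _ _) hmem
  have h2 : ψ ‖x‖ t ≤ β ‖x‖ t := hβdom _ _ (norm_nonneg x) ht
  linarith

end ControlSystem
end

section
/- A forward complete control system Σ=(X,𝒰,φ) is uniformly locally stable (ULS) and uniformly globally bounded (UGB) if and only if it is uniformly globally stable (UGS). -/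
open Set Filter

namespace ControlSystem

variable {X U : Type*} [NormedAddCommGroup X] [NormedSpace ℝ X] [Zero U]

lemma classK_nonneg {γ : ℝ → ℝ} (h : ClassK γ) : ∀ s, 0 ≤ s → 0 ≤ γ s := by
  intro s hs
  rcases eq_or_lt_of_le hs with rfl | hlt
  · exact le_of_eq h.2.2.symm
  · have := h.2.1 (self_mem_Ici) (le_of_lt hlt : (0:ℝ) ≤ s) hlt
    linarith [h.2.2]

lemma kinf0_nonneg {γ : ℝ → ℝ} (h : ClassKinf0 γ) : ∀ s, 0 ≤ s → 0 ≤ γ s := by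
  rcases h with h | h
  · exact classK_nonneg h.1
  · intro s hs; rw [h s hs]

lemma kinf0_zero {γ : ℝ → ℝ} (h : ClassKinf0 γ) : γ 0 = 0 := by
  rcases h with h | h
  · exact h.1.2.2
  · exact h 0 le_rfl

lemma kinf0_contOn {γ : ℝ → ℝ} (h : ClassKinf0 γ) : ContinuousOn γ (Ici 0) := by
  rcases h with h | h
  · exact h.1.1
  · exact (continuousOn_const (c := (0:ℝ))).congr h

lemma kinf0_monoOn {γ : ℝ → ℝ} (h : ClassKinf0 γ) : MonotoneOn γ (Ici 0) := by
  rcases h with h | h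
  · exact h.1.2.1.monotoneOn
  · intro a ha b hb _; rw [h a ha, h b hb]

lemma kinf_of_kinf0 {γ : ℝ → ℝ} (h : ClassKinf γ) : ClassKinf0 γ := Or.inl h

/-- sum of two `K∞∪{0}` functions plus a positive linear term is `K∞`. -/
lemma sum_classKinf {f g : ℝ → ℝ} {d : ℝ} (hf : ClassKinf0 f) (hg : ClassKinf0 g)
    (hd : 0 < d) : ClassKinf (fun s => f s + g s + d * s) := by
  refine ⟨⟨?_, ?_, ?_⟩, ?_⟩
  · exact (((kinf0_contOn hf).add (kinf0_contOn hg)).add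
      ((continuous_const.mul continuous_id).continuousOn))
  · intro a ha b hb hab
    have h1 := kinf0_monoOn hf ha hb (le_of_lt hab)
    have h2 := kinf0_monoOn hg ha hb (le_of_lt hab)
    have : d * a < d * b := by nlinarith
    simp only; linarith
  · simp [kinf0_zero hf, kinf0_zero hg]
  · intro c
    refine ⟨max 0 (c / d), le_max_left _ _, ?_⟩
    have hr : (0:ℝ) ≤ max 0 (c / d) := le_max_left _ _
    have h1 := kinf0_nonneg hf _ hr
    have h2 := kinf0_nonneg hg _ hr
    have h3 : c ≤ d * max 0 (c / d) := by
      have : c / d ≤ max 0 (c / d) := le_max_right _ _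
      calc c = d * (c / d) := by field_simp
        _ ≤ d * max 0 (c / d) := by nlinarith
    simp only; linarith

/-- A forward complete control system is ULS and UGB if and only if it is UGS. -/
theorem ULS_and_UGB_iff_UGS (S : ControlSystem X U) :
    (S.ULS ∧ S.UGB) ↔ S.UGS := by
  constructor
  · rintro ⟨⟨σ₁, γ₁, hσ₁, hγ₁, r, hr, hULS⟩, σ₂, γ₂, c, hσ₂, hγ₂, hc, hUGB⟩
    have hdr : 0 < c / r := div_pos hc hr
    refine ⟨fun s => σ₁ s + σ₂ s + (c/r) * s, fun s => γ₁ s + γ₂ s + (c/r) * s,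
      sum_classKinf (kinf_of_kinf0 hσ₁) (kinf_of_kinf0 hσ₂) hdr,
      Or.inl (sum_classKinf hγ₁ hγ₂ hdr), ?_⟩
    intro t ht x u hu
    have hx0 : (0:ℝ) ≤ ‖x‖ := norm_nonneg x
    have hu0 : (0:ℝ) ≤ S.Unorm u := S.Unorm_nonneg u
    have hσ₁n := classK_nonneg hσ₁.1
    have hσ₂n := classK_nonneg hσ₂.1
    have hγ₁n := kinf0_nonneg hγ₁
    have hγ₂n := kinf0_nonneg hγ₂
    by_cases hcase : ‖x‖ ≤ r ∧ S.Unorm u ≤ r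
    · have := hULS t ht x hcase.1 u hu hcase.2
      have n1 := hσ₂n _ hx0
      have n2 := hγ₂n _ hu0
      simp only
      nlinarith
    · have := hUGB t ht x u hu
      have hmax : r < ‖x‖ + S.Unorm u := by
        push_neg at hcase
        by_cases hx : ‖x‖ ≤ r
        · have := hcase hx; linarith
        · push_neg at hx; linarith
      have hcbound : c ≤ (c/r) * (‖x‖ + S.Unorm u) := by
        have : c = (c/r) * r := by field_simp
        nlinarith
      have n1 := hσ₁n _ hx0
      have n2 := hγ₁n _ hu0
      simp only
      nlinarith
  · rintro ⟨σ, γ, hσ, hγ, hUGS⟩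
    constructor
    · exact ⟨σ, γ, hσ, hγ, 1, one_pos, fun t ht x _ u hu _ => hUGS t ht x u hu⟩
    · refine ⟨σ, γ, 1, hσ, hγ, one_pos, fun t ht x u hu => ?_⟩
      have := hUGS t ht x u hu
      linarith

end ControlSystem
end

section
/- For a forward complete control system Σ=(X,𝒰,φ) the following are equivalent: (i) Σ has bounded reachability sets (BRS); (ii) there exists a continuous function μ:ℝ₊³→ℝ₊ which is increasing with respect to the componentwise partial order on ℝ₊³ such that ‖φ(t,x,u)‖_X ≤ μ(‖x‖_X,‖u‖_𝒰,t) for all x∈X, u∈𝒰, t≥0; (iii) there exists a continuous function μ:ℝ₊³→ℝ₊ such that ‖φ(t,x,u)‖_X ≤ μ(‖x‖_X,‖u‖_𝒰,t) for all x∈X, u∈𝒰, t≥0. -/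
open Set Filter

namespace ControlSystem

variable {X U : Type*} [NormedAddCommGroup X] [NormedSpace ℝ X] [Zero U]

open MeasureTheory in
private lemma exists_envelope (a : ℕ → ℝ) (hmono : Monotone a) (hnn : ∀ n, 0 ≤ a n) :
    ∃ g : ℝ → ℝ, Continuous g ∧ Monotone g ∧ (∀ s, 0 ≤ g s) ∧
      ∀ s : ℝ, 0 ≤ s → a ⌊s⌋₊ ≤ g s := by
  set h : ℝ → ℝ := fun t => a ⌊max t 0⌋₊ with hh
  have hhm : Monotone h := fun t t' htt' =>
    hmono (Nat.floor_mono (max_le_max htt' le_rfl))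
  have hint : ∀ p q : ℝ, IntervalIntegrable h volume p q := fun p q => hhm.intervalIntegrable
  have hshift : ∀ s : ℝ, Monotone (fun t => h (t + s)) := fun s t t' htt' =>
    hhm (by linarith)
  have key : ∀ s : ℝ, (∫ t in s..(s+1), h t) = ∫ t in (0:ℝ)..1, h (t + s) := by
    intro s
    rw [intervalIntegral.integral_comp_add_right h s]
    norm_num [add_comm]
  have hlb : ∀ s : ℝ, h s ≤ ∫ t in s..(s+1), h t := by
    intro s
    rw [key s]
    have : h s = ∫ _t in (0:ℝ)..1, h s := by simp
    rw [this]
    exact intervalIntegral.integral_mono_on zero_le_one intervalIntegrable_const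
      (hshift s).intervalIntegrable (fun t ht => hhm (by linarith [ht.1]))
  refine ⟨fun s => ∫ t in s..(s+1), h t, ?_, ?_, fun s => le_trans (hnn _) (hlb s), ?_⟩
  · have heq : (fun s => ∫ t in s..(s+1), h t)
        = fun s => (∫ t in (0:ℝ)..(s+1), h t) - ∫ t in (0:ℝ)..s, h t :=
      funext fun s => (intervalIntegral.integral_interval_sub_left (hint 0 (s+1)) (hint 0 s)).symm
    rw [heq]
    exact ((intervalIntegral.continuous_primitive hint 0).comp
      (continuous_id.add continuous_const)).sub (intervalIntegral.continuous_primitive hint 0)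
  · intro s s' hss'
    show (∫ t in s..(s+1), h t) ≤ ∫ t in s'..(s'+1), h t
    rw [key s, key s']
    exact intervalIntegral.integral_mono_on zero_le_one (hshift s).intervalIntegrable
      (hshift s').intervalIntegrable (fun t _ => hhm (by linarith))
  · intro s hs
    have : h s = a ⌊s⌋₊ := by simp [hh, max_eq_left hs]
    rw [← this]
    exact hlb s

private lemma brs_of_bound {X U : Type*} [NormedAddCommGroup X] [NormedSpace ℝ X] [Zero U]
    (S : ControlSystem X U) (μ : ℝ → ℝ → ℝ → ℝ)
    (hc : ContinuousOn (fun p : ℝ × ℝ × ℝ => μ p.1 p.2.1 p.2.2)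
      ((Ici 0) ×ˢ (Ici 0) ×ˢ (Ici 0)))
    (hb : ∀ x : X, ∀ u ∈ S.inputs, ∀ t : ℝ, 0 ≤ t →
      ‖S.phi t x u‖ ≤ μ ‖x‖ (S.Unorm u) t) : S.BRS := by
  intro C hC τ hτ
  have hK : IsCompact ((Icc (0:ℝ) C) ×ˢ (Icc (0:ℝ) C) ×ˢ (Icc (0:ℝ) τ)) :=
    isCompact_Icc.prod (isCompact_Icc.prod isCompact_Icc)
  have hsub : ((Icc (0:ℝ) C) ×ˢ (Icc (0:ℝ) C) ×ˢ (Icc (0:ℝ) τ))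
      ⊆ ((Ici (0:ℝ)) ×ˢ (Ici (0:ℝ)) ×ˢ (Ici (0:ℝ))) :=
    prod_mono Icc_subset_Ici_self (prod_mono Icc_subset_Ici_self Icc_subset_Ici_self)
  obtain ⟨M, hM⟩ := hK.exists_bound_of_continuousOn (hc.mono hsub)
  refine ⟨M, fun x hx u hu huN t ht => ?_⟩
  have hpt : ((‖x‖, (S.Unorm u, t)) : ℝ × ℝ × ℝ)
      ∈ (Icc (0:ℝ) C) ×ˢ (Icc (0:ℝ) C) ×ˢ (Icc (0:ℝ) τ) :=
    ⟨⟨norm_nonneg x, hx⟩, ⟨S.Unorm_nonneg u, huN⟩, ht⟩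
  calc ‖S.phi t x u‖ ≤ μ ‖x‖ (S.Unorm u) t := hb x u hu t ht.1
    _ ≤ |μ ‖x‖ (S.Unorm u) t| := le_abs_self _
    _ ≤ M := by simpa [Real.norm_eq_abs] using hM _ hpt

private lemma bound_of_brs {X U : Type*} [NormedAddCommGroup X] [NormedSpace ℝ X] [Zero U]
    (S : ControlSystem X U) (h : S.BRS) :
    ∃ μ : ℝ → ℝ → ℝ → ℝ,
      ContinuousOn (fun p : ℝ × ℝ × ℝ => μ p.1 p.2.1 p.2.2)
        ((Ici 0) ×ˢ (Ici 0) ×ˢ (Ici 0)) ∧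
      (∀ r₁ r₂ r₃ R₁ R₂ R₃ : ℝ, 0 ≤ r₁ → 0 ≤ r₂ → 0 ≤ r₃ →
        r₁ ≤ R₁ → r₂ ≤ R₂ → r₃ ≤ R₃ → μ r₁ r₂ r₃ ≤ μ R₁ R₂ R₃) ∧
      (∀ r₁ r₂ r₃ : ℝ, 0 ≤ r₁ → 0 ≤ r₂ → 0 ≤ r₃ → 0 ≤ μ r₁ r₂ r₃) ∧
      ∀ x : X, ∀ u ∈ S.inputs, ∀ t : ℝ, 0 ≤ t →
        ‖S.phi t x u‖ ≤ μ ‖x‖ (S.Unorm u) t := by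
  have hMex : ∀ n : ℕ, ∃ M : ℝ, ∀ x : X, ‖x‖ ≤ (n:ℝ)+1 → ∀ u ∈ S.inputs,
      S.Unorm u ≤ (n:ℝ)+1 → ∀ t ∈ Icc (0:ℝ) ((n:ℝ)+1), ‖S.phi t x u‖ ≤ M :=
    fun n => h ((n:ℝ)+1) (by positivity) ((n:ℝ)+1) (by positivity)
  choose Mf hMf using hMex
  let a : ℕ → ℝ := fun n => Nat.rec (max 0 (Mf 0)) (fun k ih => max ih (Mf (k+1))) n
  have hamono : Monotone a := monotone_nat_of_le_succ fun n => le_max_left _ _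
  have hann : ∀ n, 0 ≤ a n := fun n =>
    le_trans (le_max_left 0 (Mf 0)) (hamono (Nat.zero_le n))
  have haM : ∀ n, Mf n ≤ a n := by
    intro n
    cases n with
    | zero => exact le_max_right _ _
    | succ k => exact le_max_right _ _
  obtain ⟨g, gc, gm, gnn, glb⟩ := exists_envelope a hamono hann
  refine ⟨fun r₁ r₂ r₃ => g (max r₁ (max r₂ r₃)), ?_, ?_, fun _ _ _ _ _ _ => gnn _, ?_⟩
  · exact (gc.comp (continuous_fst.max
      ((continuous_fst.comp continuous_snd).max
        (continuous_snd.comp continuous_snd)))).continuousOn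
  · intro r₁ r₂ r₃ R₁ R₂ R₃ _ _ _ h1 h2 h3
    exact gm (max_le_max h1 (max_le_max h2 h3))
  · intro x u hu t ht
    set m := max ‖x‖ (max (S.Unorm u) t) with hm
    have hm0 : 0 ≤ m := le_trans (norm_nonneg x) (le_max_left _ _)
    have hfl : m ≤ (⌊m⌋₊ : ℝ) + 1 := (Nat.lt_floor_add_one m).le
    have h1 : ‖x‖ ≤ (⌊m⌋₊ : ℝ) + 1 := le_trans (le_max_left _ _) hfl
    have h2 : S.Unorm u ≤ (⌊m⌋₊ : ℝ) + 1 :=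
      le_trans (le_trans (le_max_left _ _) (le_max_right _ _)) hfl
    have h3 : t ≤ (⌊m⌋₊ : ℝ) + 1 :=
      le_trans (le_trans (le_max_right _ _) (le_max_right _ _)) hfl
    have hb := hMf ⌊m⌋₊ x h1 u hu h2 t ⟨ht, h3⟩
    exact hb.trans ((haM _).trans (glb m hm0))

/-- Characterization of the BRS property: BRS is equivalent to the existence of a
continuous increasing bound `μ(‖x‖,‖u‖,t)` for the flow, and also to the existence of a
merely continuous such bound. -/
theorem BRS_characterization (S : ControlSystem X U) :
    (S.BRS ↔ ∃ μ : ℝ → ℝ → ℝ → ℝ,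
      ContinuousOn (fun p : ℝ × ℝ × ℝ => μ p.1 p.2.1 p.2.2)
        ((Ici 0) ×ˢ (Ici 0) ×ˢ (Ici 0)) ∧
      (∀ r₁ r₂ r₃ R₁ R₂ R₃ : ℝ, 0 ≤ r₁ → 0 ≤ r₂ → 0 ≤ r₃ →
        r₁ ≤ R₁ → r₂ ≤ R₂ → r₃ ≤ R₃ → μ r₁ r₂ r₃ ≤ μ R₁ R₂ R₃) ∧
      (∀ r₁ r₂ r₃ : ℝ, 0 ≤ r₁ → 0 ≤ r₂ → 0 ≤ r₃ → 0 ≤ μ r₁ r₂ r₃) ∧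
      ∀ x : X, ∀ u ∈ S.inputs, ∀ t : ℝ, 0 ≤ t →
        ‖S.phi t x u‖ ≤ μ ‖x‖ (S.Unorm u) t) ∧
    (S.BRS ↔ ∃ μ : ℝ → ℝ → ℝ → ℝ,
      ContinuousOn (fun p : ℝ × ℝ × ℝ => μ p.1 p.2.1 p.2.2)
        ((Ici 0) ×ˢ (Ici 0) ×ˢ (Ici 0)) ∧
      (∀ r₁ r₂ r₃ : ℝ, 0 ≤ r₁ → 0 ≤ r₂ → 0 ≤ r₃ → 0 ≤ μ r₁ r₂ r₃) ∧
      ∀ x : X, ∀ u ∈ S.inputs, ∀ t : ℝ, 0 ≤ t →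
        ‖S.phi t x u‖ ≤ μ ‖x‖ (S.Unorm u) t) := by
  have fwd := fun hb => bound_of_brs S hb
  constructor
  · constructor
    · exact fwd
    · rintro ⟨μ, hc, _, _, hb⟩
      exact brs_of_bound S μ hc hb
  · constructor
    · intro hb
      obtain ⟨μ, hc, _, hnn, hbd⟩ := fwd hb
      exact ⟨μ, hc, hnn, hbd⟩
    · rintro ⟨μ, hc, _, hb⟩
      exact brs_of_bound S μ hc hb


end ControlSystem
end
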